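/- arXiv:1503.08368 — 3 statements merged into one kernel-verified Lean document; each statement's English description precedes it below -/
import Mathlib

section
/- Let n ≥ 3, q ∈ [0,1], and let P_q be the top-or-bottom-to-random transition matrix on S_n. Define g : S_n → ℝ by g(σ) = Σ_{i ∈ Peak(σ)} C(n−3, i−1)·q^{i−1}·(1−q)^{n−2−i}. Then for every integer t ≥ 0, the entry of the vector P_q^t · g at the identity permutation equals (1 − ((n−3)/n)^t)·(1/3). (In words: starting from an ascendingly ordered deck, the expected value of the weighted peak statistic g after t top-or-bottom-to-random shuffles is (1 − ((n−3)/n)^t)/3.) -/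
open Finset

/-- 0-indexed peak set: positions `i` with `σ(i) < σ(i+1) > σ(i+2)`. -/
def peakSet (n : ℕ) (σ : Equiv.Perm (Fin n)) : Finset ℕ :=
  (Finset.range (n - 2)).filter
    (fun i => ∃ h : i + 2 < n,
      σ ⟨i, Nat.lt_of_succ_lt (Nat.lt_of_succ_lt h)⟩ < σ ⟨i + 1, Nat.lt_of_succ_lt h⟩ ∧
      σ ⟨i + 2, h⟩ < σ ⟨i + 1, Nat.lt_of_succ_lt h⟩)

/-- `pk σ` is the number of peaks of `σ`. -/
def pk (n : ℕ) (σ : Equiv.Perm (Fin n)) : ℕ := (peakSet n σ).card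

/-- the cycle `e_i` (0-indexed): sends `j ↦ j-1` for `j > i`, `i ↦ n-1`, fixes `j < i`.
(`Fin.cycleRange i` is the cycle `c_i` (0-indexed): sends `j ↦ j+1` for `j < i`,
`i ↦ 0`, fixes `j > i`.) -/
def botCycle (n : ℕ) (i : Fin n) : Equiv.Perm (Fin n) :=
  Fin.revPerm * Fin.cycleRange i.rev * Fin.revPerm

/-- top-or-bottom-to-random transition matrix with parameter `q`:
with probability `q` remove the top card and reinsert it at a uniform position,
otherwise do the same with the bottom card. -/
noncomputable def Pq (n : ℕ) (q : ℝ) : Matrix (Equiv.Perm (Fin n)) (Equiv.Perm (Fin n)) ℝ :=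
  fun σ τ =>
    q / n * ((Finset.univ.filter (fun i : Fin n => τ = σ * Fin.cycleRange i)).card : ℝ) +
    (1 - q) / n * ((Finset.univ.filter (fun i : Fin n => τ = σ * botCycle n i)).card : ℝ)

/-- weighted peak statistic `g(σ) = Σ_{j ∈ Peak(σ)} C(n-3,j) q^j (1-q)^{n-3-j}`
(0-indexed version of `Σ_{i ∈ Peak(σ)} C(n-3,i-1) q^{i-1} (1-q)^{n-2-i}`). -/
noncomputable def gpk (n : ℕ) (q : ℝ) (σ : Equiv.Perm (Fin n)) : ℝ :=
  ∑ j ∈ peakSet n σ, ((n - 3).choose j : ℝ) * q ^ j * (1 - q) ^ (n - 3 - j)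

def pcond (n : ℕ) (σ : Equiv.Perm (Fin n)) (j : ℕ) : Prop :=
  ∃ h : j + 2 < n,
      σ ⟨j, Nat.lt_of_succ_lt (Nat.lt_of_succ_lt h)⟩ < σ ⟨j + 1, Nat.lt_of_succ_lt h⟩ ∧
      σ ⟨j + 2, h⟩ < σ ⟨j + 1, Nat.lt_of_succ_lt h⟩
instance pcond.dec (n : ℕ) (σ : Equiv.Perm (Fin n)) (j : ℕ) : Decidable (pcond n σ j) := by
  unfold pcond; infer_instance
noncomputable def Xi (n : ℕ) (σ : Equiv.Perm (Fin n)) (j : ℕ) : ℝ :=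
  if pcond n σ j then 1 else 0
lemma Xi_eq {n : ℕ} (σ : Equiv.Perm (Fin n)) {j : ℕ} (h : j + 2 < n) :
    Xi n σ j = if ((σ ⟨j, by omega⟩).val < (σ ⟨j + 1, by omega⟩).val ∧
        (σ ⟨j + 2, by omega⟩).val < (σ ⟨j + 1, by omega⟩).val) then 1 else 0 := by
  unfold Xi pcond
  have hiff : (∃ h : j + 2 < n,
      σ ⟨j, Nat.lt_of_succ_lt (Nat.lt_of_succ_lt h)⟩ < σ ⟨j + 1, Nat.lt_of_succ_lt h⟩ ∧
      σ ⟨j + 2, h⟩ < σ ⟨j + 1, Nat.lt_of_succ_lt h⟩) ↔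
      ((σ ⟨j, by omega⟩).val < (σ ⟨j + 1, by omega⟩).val ∧
        (σ ⟨j + 2, by omega⟩).val < (σ ⟨j + 1, by omega⟩).val) := by
    constructor
    · rintro ⟨h', hc⟩
      exact ⟨Fin.lt_def.mp hc.1, Fin.lt_def.mp hc.2⟩
    · intro hc
      exact ⟨h, Fin.lt_def.mpr hc.1, Fin.lt_def.mpr hc.2⟩
  simp only [hiff]
lemma tri_aux {A B C : ℕ} (hAB : A ≠ B) (hAC : A ≠ C) (hBC : B ≠ C) :
    ((if A < B ∧ C < B then (1 : ℝ) else 0) + (if B < A ∧ C < A then 1 else 0)) +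
      (if B < C ∧ A < C then 1 else 0) = 1 := by
  split_ifs <;> norm_num <;> omega
lemma sum_fin_split {n : ℕ} (f : Fin n → ℝ) (j : ℕ) (hj : j + 3 ≤ n) :
    ∑ i : Fin n, f i =
      ((((∑ k ∈ Finset.range j, (if h : k < n then f ⟨k, h⟩ else 0))
        + f ⟨j, by omega⟩) + f ⟨j + 1, by omega⟩) + f ⟨j + 2, by omega⟩)
      + ∑ k ∈ Finset.Ico (j + 3) n, (if h : k < n then f ⟨k, h⟩ else 0) := by
  have h0 : ∑ i : Fin n, f i = ∑ k ∈ Finset.range n, (if h : k < n then f ⟨k, h⟩ else 0) := by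
    rw [← Fin.sum_univ_eq_sum_range (fun k => if h : k < n then f ⟨k, h⟩ else 0) n]
    exact Finset.sum_congr rfl fun i _ => by simp [i.isLt]
  rw [h0, Finset.range_eq_Ico,
    ← Finset.sum_Ico_consecutive _ (Nat.zero_le (j + 3)) (by omega : j + 3 ≤ n),
    ← Finset.range_eq_Ico, Finset.sum_range_succ, Finset.sum_range_succ, Finset.sum_range_succ,
    dif_pos (by omega : j < n), dif_pos (by omega : j + 1 < n), dif_pos (by omega : j + 2 < n)]

noncomputable def wgt (n : ℕ) (q : ℝ) (j : ℕ) : ℝ :=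
  ((n - 3).choose j : ℝ) * q ^ j * (1 - q) ^ (n - 3 - j)

lemma gpk_eq (n : ℕ) (q : ℝ) (σ : Equiv.Perm (Fin n)) :
    gpk n q σ = ∑ j ∈ Finset.range (n - 2), wgt n q j * Xi n σ j := by
  unfold gpk wgt Xi
  have : peakSet n σ = (Finset.range (n - 2)).filter (fun j => pcond n σ j) := by
    unfold peakSet pcond
    apply Finset.filter_congr_decidable
  rw [this, Finset.sum_filter]
  apply Finset.sum_congr rfl
  intro j _
  split_ifs <;> ring

lemma sum_wgt {n : ℕ} (hn : 3 ≤ n) (q : ℝ) :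
    ∑ j ∈ Finset.range (n - 2), wgt n q j = 1 := by
  have h1 : n - 2 = (n - 3) + 1 := by omega
  have := add_pow q (1 - q) (n - 3)
  simp only [add_sub_cancel, one_pow] at this
  rw [h1, this]
  apply Finset.sum_congr rfl
  intro j _
  unfold wgt
  ring

lemma key_id {n : ℕ} (q : ℝ) (j : ℕ) :
    (1 - q) * ((j + 1 : ℕ) : ℝ) * wgt n q (j + 1) = q * ((n - 3 - j : ℕ) : ℝ) * wgt n q j := by
  unfold wgt
  rcases lt_or_ge j (n - 3) with h | h
  · have hc := Nat.choose_succ_right_eq (n - 3) j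
    have hcast : ((n - 3).choose (j + 1) : ℝ) * (((j + 1 : ℕ)) : ℝ) =
        ((n - 3).choose j : ℝ) * (((n - 3 - j : ℕ)) : ℝ) := by exact_mod_cast hc
    have hk : n - 3 - j = (n - 3 - (j + 1)) + 1 := by omega
    rw [hk] at hcast ⊢
    push_cast at hcast ⊢
    linear_combination q ^ (j + 1) * (1 - q) ^ (n - 3 - (j + 1) + 1) * hcast
  · have h1 : (n - 3).choose (j + 1) = 0 := Nat.choose_eq_zero_of_lt (by omega)
    have h2 : n - 3 - j = 0 := by omega
    rw [h1, h2]
    norm_num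

lemma botCycle_of_lt {n : ℕ} {i j : Fin (n + 1)} (h : j < i) : botCycle (n + 1) i j = j := by
  unfold botCycle
  simp only [Equiv.Perm.mul_apply, Fin.revPerm_apply]
  rw [Fin.cycleRange_of_gt (by rwa [Fin.rev_lt_rev])]
  exact Fin.rev_rev j

lemma botCycle_self {n : ℕ} (i : Fin (n + 1)) : botCycle (n + 1) i i = ⟨n, Nat.lt_succ_self n⟩ := by
  unfold botCycle
  simp only [Equiv.Perm.mul_apply, Fin.revPerm_apply]
  rw [Fin.cycleRange_self]
  apply Fin.ext
  simp [Fin.val_rev]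

lemma botCycle_of_gt {n : ℕ} {i j : Fin (n + 1)} (h : i < j) :
    botCycle (n + 1) i j = ⟨j.val - 1, by omega⟩ := by
  unfold botCycle
  simp only [Equiv.Perm.mul_apply, Fin.revPerm_apply]
  rw [Fin.cycleRange_of_lt (by rwa [Fin.rev_lt_rev])]
  apply Fin.ext
  have h1 : j.rev < Fin.last n := lt_of_lt_of_le (by rwa [Fin.rev_lt_rev]) (Fin.le_last _)
  have hj : 1 ≤ j.val := by have := Fin.lt_def.mp h; omega
  have hjn := j.isLt
  simp only [Fin.val_rev, Fin.val_add_one_of_lt h1, Fin.val_mk]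
  omega

lemma sum_Xc {n : ℕ} (hn : 3 ≤ n) (σ : Equiv.Perm (Fin n)) {j : ℕ} (hj : j < n - 2) :
    ∑ i : Fin n, Xi n (σ * Fin.cycleRange i) j =
      (j : ℝ) * Xi n σ j + ((n - 3 - j : ℕ) : ℝ) * Xi n σ (j + 1) + 1 := by
  obtain ⟨m, rfl⟩ : ∃ m, n = m + 1 := ⟨n - 1, by omega⟩
  have hj2 : j + 2 < m + 1 := by omega
  have h0m : 0 < m + 1 := by omega
  have h1m : j + 1 < m + 1 := by omega
  have h2m : j + 2 < m + 1 := by omega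
  have hne : ∀ x y : Fin (m + 1), x ≠ y → (σ x).val ≠ (σ y).val := fun x y h hh =>
    σ.injective.ne h (Fin.val_injective hh)
  rw [sum_fin_split _ j (by omega)]
  have p1 : ∀ k ∈ Finset.range j,
      (if h : k < m + 1 then Xi (m + 1) (σ * Fin.cycleRange (⟨k, h⟩ : Fin (m + 1))) j else 0)
        = Xi (m + 1) σ j := by
    intro k hk
    rw [Finset.mem_range] at hk
    have hkm : k < m + 1 := by omega
    rw [dif_pos hkm, Xi_eq _ hj2, Xi_eq _ hj2]
    have hv : ∀ (p : ℕ) (hp : p < m + 1), j ≤ p →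
        (σ * Fin.cycleRange (⟨k, hkm⟩ : Fin (m + 1))) ⟨p, hp⟩ = σ ⟨p, hp⟩ := by
      intro p hp hjp
      rw [Equiv.Perm.mul_apply, Fin.cycleRange_of_gt (Fin.mk_lt_mk.mpr (by omega))]
    rw [hv j _ le_rfl, hv (j + 1) _ (by omega), hv (j + 2) _ (by omega)]
  have p5 : ∀ k ∈ Finset.Ico (j + 3) (m + 1),
      (if h : k < m + 1 then Xi (m + 1) (σ * Fin.cycleRange (⟨k, h⟩ : Fin (m + 1))) j else 0)
        = Xi (m + 1) σ (j + 1) := by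
    intro k hk
    rw [Finset.mem_Ico] at hk
    obtain ⟨hk1, hk2⟩ := hk
    have hkm : k < m + 1 := hk2
    have hj3 : (j + 1) + 2 < m + 1 := by omega
    rw [dif_pos hkm, Xi_eq _ hj2, Xi_eq _ hj3]
    have hv : ∀ (p r : ℕ) (hp : p < m + 1) (hr : r < m + 1), p ≤ j + 2 → r = p + 1 →
        (σ * Fin.cycleRange (⟨k, hkm⟩ : Fin (m + 1))) ⟨p, hp⟩ = σ ⟨r, hr⟩ := by
      intro p r hp hr hpj hrp
      rw [Equiv.Perm.mul_apply]
      congr 1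
      apply Fin.ext
      rw [Fin.coe_cycleRange_of_lt (Fin.mk_lt_mk.mpr (by omega))]
      simp only [Fin.val_mk]
      omega
    rw [hv j (j + 1) _ (by omega) (by omega) rfl,
      hv (j + 1) (j + 1 + 1) _ (by omega) (by omega) rfl,
      hv (j + 2) (j + 1 + 2) _ (by omega) le_rfl (by omega)]
  rw [Finset.sum_congr rfl p1, Finset.sum_congr rfl p5, Finset.sum_const, Finset.sum_const,
    Finset.card_range, Nat.card_Ico, nsmul_eq_mul, nsmul_eq_mul]
  have e1 : Xi (m + 1) (σ * Fin.cycleRange (⟨j, by omega⟩ : Fin (m + 1))) j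
      = if (σ ⟨0, h0m⟩).val < (σ ⟨j + 1, h1m⟩).val ∧
          (σ ⟨j + 2, h2m⟩).val < (σ ⟨j + 1, h1m⟩).val then (1 : ℝ) else 0 := by
    rw [Xi_eq _ hj2]
    have h0 : (σ * Fin.cycleRange (⟨j, by omega⟩ : Fin (m + 1))) ⟨j, by omega⟩
        = σ ⟨0, h0m⟩ := by
      rw [Equiv.Perm.mul_apply, Fin.cycleRange_self, Fin.mk_zero]
    have h1 : (σ * Fin.cycleRange (⟨j, by omega⟩ : Fin (m + 1))) ⟨j + 1, by omega⟩
        = σ ⟨j + 1, h1m⟩ := by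
      rw [Equiv.Perm.mul_apply, Fin.cycleRange_of_gt (Fin.mk_lt_mk.mpr (by omega))]
    have h2 : (σ * Fin.cycleRange (⟨j, by omega⟩ : Fin (m + 1))) ⟨j + 2, by omega⟩
        = σ ⟨j + 2, h2m⟩ := by
      rw [Equiv.Perm.mul_apply, Fin.cycleRange_of_gt (Fin.mk_lt_mk.mpr (by omega))]
    rw [h0, h1, h2]
  have e2 : Xi (m + 1) (σ * Fin.cycleRange (⟨j + 1, by omega⟩ : Fin (m + 1))) j
      = if (σ ⟨j + 1, h1m⟩).val < (σ ⟨0, h0m⟩).val ∧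
          (σ ⟨j + 2, h2m⟩).val < (σ ⟨0, h0m⟩).val then (1 : ℝ) else 0 := by
    rw [Xi_eq _ hj2]
    have h0 : (σ * Fin.cycleRange (⟨j + 1, by omega⟩ : Fin (m + 1))) ⟨j, by omega⟩
        = σ ⟨j + 1, h1m⟩ := by
      rw [Equiv.Perm.mul_apply]
      congr 1
      apply Fin.ext
      rw [Fin.coe_cycleRange_of_lt (Fin.mk_lt_mk.mpr (by omega))]
    have h1 : (σ * Fin.cycleRange (⟨j + 1, by omega⟩ : Fin (m + 1))) ⟨j + 1, by omega⟩
        = σ ⟨0, h0m⟩ := by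
      rw [Equiv.Perm.mul_apply, Fin.cycleRange_self, Fin.mk_zero]
    have h2 : (σ * Fin.cycleRange (⟨j + 1, by omega⟩ : Fin (m + 1))) ⟨j + 2, by omega⟩
        = σ ⟨j + 2, h2m⟩ := by
      rw [Equiv.Perm.mul_apply, Fin.cycleRange_of_gt (Fin.mk_lt_mk.mpr (by omega))]
    rw [h0, h1, h2]
  have e3 : Xi (m + 1) (σ * Fin.cycleRange (⟨j + 2, by omega⟩ : Fin (m + 1))) j
      = if (σ ⟨j + 1, h1m⟩).val < (σ ⟨j + 2, h2m⟩).val ∧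
          (σ ⟨0, h0m⟩).val < (σ ⟨j + 2, h2m⟩).val then (1 : ℝ) else 0 := by
    rw [Xi_eq _ hj2]
    have h0 : (σ * Fin.cycleRange (⟨j + 2, by omega⟩ : Fin (m + 1))) ⟨j, by omega⟩
        = σ ⟨j + 1, h1m⟩ := by
      rw [Equiv.Perm.mul_apply]
      congr 1
      apply Fin.ext
      rw [Fin.coe_cycleRange_of_lt (Fin.mk_lt_mk.mpr (by omega))]
    have h1 : (σ * Fin.cycleRange (⟨j + 2, by omega⟩ : Fin (m + 1))) ⟨j + 1, by omega⟩
        = σ ⟨j + 2, h2m⟩ := by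
      rw [Equiv.Perm.mul_apply]
      congr 1
      apply Fin.ext
      rw [Fin.coe_cycleRange_of_lt (Fin.mk_lt_mk.mpr (by omega))]
    have h2 : (σ * Fin.cycleRange (⟨j + 2, by omega⟩ : Fin (m + 1))) ⟨j + 2, by omega⟩
        = σ ⟨0, h0m⟩ := by
      rw [Equiv.Perm.mul_apply, Fin.cycleRange_self, Fin.mk_zero]
    rw [h0, h1, h2]
  rw [e1, e2, e3]
  have hAB : (σ ⟨0, h0m⟩).val ≠ (σ ⟨j + 1, h1m⟩).val :=
    hne _ _ (by simp only [ne_eq, Fin.mk.injEq]; omega)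
  have hAC : (σ ⟨0, h0m⟩).val ≠ (σ ⟨j + 2, h2m⟩).val :=
    hne _ _ (by simp only [ne_eq, Fin.mk.injEq]; omega)
  have hBC : (σ ⟨j + 1, h1m⟩).val ≠ (σ ⟨j + 2, h2m⟩).val :=
    hne _ _ (by simp only [ne_eq, Fin.mk.injEq]; omega)
  have htri := tri_aux hAB hAC hBC
  have hcard : ((m + 1 - (j + 3) : ℕ) : ℝ) = ((m + 1 - 3 - j : ℕ) : ℝ) := by
    congr 1
    omega
  rw [hcard]
  linarith [htri]

lemma sum_Xe {n : ℕ} (hn : 3 ≤ n) (σ : Equiv.Perm (Fin n)) {j : ℕ} (hj : j < n - 2) :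
    ∑ i : Fin n, Xi n (σ * botCycle n i) j =
      (j : ℝ) * Xi n σ (j - 1) + ((n - 3 - j : ℕ) : ℝ) * Xi n σ j + 1 := by
  obtain ⟨m, rfl⟩ : ∃ m, n = m + 1 := ⟨n - 1, by omega⟩
  have hj2 : j + 2 < m + 1 := by omega
  have hmm : m < m + 1 := by omega
  have h0m : j < m + 1 := by omega
  have h1m : j + 1 < m + 1 := by omega
  have hne : ∀ x y : Fin (m + 1), x ≠ y → (σ x).val ≠ (σ y).val := fun x y h hh =>
    σ.injective.ne h (Fin.val_injective hh)
  rw [sum_fin_split _ j (by omega)]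
  -- region k < j : peak condition at j - 1 (k < j forces j ≥ 1)
  have p1 : ∀ k ∈ Finset.range j,
      (if h : k < m + 1 then Xi (m + 1) (σ * botCycle (m + 1) (⟨k, h⟩ : Fin (m + 1))) j else 0)
        = Xi (m + 1) σ (j - 1) := by
    intro k hk
    rw [Finset.mem_range] at hk
    have hj1 : 1 ≤ j := by omega
    have hj1' : (j - 1) + 2 < m + 1 := by omega
    have hkm : k < m + 1 := by omega
    rw [dif_pos hkm, Xi_eq _ hj2, Xi_eq _ hj1']
    have hv : ∀ (p r : ℕ) (hp : p < m + 1) (hr : r < m + 1), j ≤ p → r + 1 = p →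
        (σ * botCycle (m + 1) (⟨k, hkm⟩ : Fin (m + 1))) ⟨p, hp⟩ = σ ⟨r, hr⟩ := by
      intro p r hp hr hjp hrp
      rw [Equiv.Perm.mul_apply, botCycle_of_gt (Fin.mk_lt_mk.mpr (by omega))]
      congr 1
      apply Fin.ext
      simp only [Fin.val_mk]
      omega
    rw [hv j (j - 1) _ (by omega) le_rfl (by omega),
      hv (j + 1) (j - 1 + 1) _ (by omega) (by omega) (by omega),
      hv (j + 2) (j - 1 + 2) _ (by omega) (by omega) (by omega)]
  -- region k ≥ j + 3 : peak condition at j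
  have p5 : ∀ k ∈ Finset.Ico (j + 3) (m + 1),
      (if h : k < m + 1 then Xi (m + 1) (σ * botCycle (m + 1) (⟨k, h⟩ : Fin (m + 1))) j else 0)
        = Xi (m + 1) σ j := by
    intro k hk
    rw [Finset.mem_Ico] at hk
    obtain ⟨hk1, hk2⟩ := hk
    have hkm : k < m + 1 := hk2
    rw [dif_pos hkm, Xi_eq _ hj2, Xi_eq _ hj2]
    have hv : ∀ (p : ℕ) (hp : p < m + 1), p ≤ j + 2 →
        (σ * botCycle (m + 1) (⟨k, hkm⟩ : Fin (m + 1))) ⟨p, hp⟩ = σ ⟨p, hp⟩ := by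
      intro p hp hpj
      rw [Equiv.Perm.mul_apply, botCycle_of_lt (Fin.mk_lt_mk.mpr (by omega))]
    rw [hv j _ (by omega), hv (j + 1) _ (by omega), hv (j + 2) _ le_rfl]
  rw [Finset.sum_congr rfl p1, Finset.sum_congr rfl p5, Finset.sum_const, Finset.sum_const,
    Finset.card_range, Nat.card_Ico, nsmul_eq_mul, nsmul_eq_mul]
  -- middle three terms, with A = σ(m), B = σ(j), C = σ(j+1)
  have e1 : Xi (m + 1) (σ * botCycle (m + 1) (⟨j, by omega⟩ : Fin (m + 1))) j
      = if (σ ⟨m, hmm⟩).val < (σ ⟨j, h0m⟩).val ∧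
          (σ ⟨j + 1, h1m⟩).val < (σ ⟨j, h0m⟩).val then (1 : ℝ) else 0 := by
    rw [Xi_eq _ hj2]
    have h0 : (σ * botCycle (m + 1) (⟨j, by omega⟩ : Fin (m + 1))) ⟨j, by omega⟩
        = σ ⟨m, hmm⟩ := by
      rw [Equiv.Perm.mul_apply, botCycle_self]
    have h1 : (σ * botCycle (m + 1) (⟨j, by omega⟩ : Fin (m + 1))) ⟨j + 1, by omega⟩
        = σ ⟨j, h0m⟩ := by
      rw [Equiv.Perm.mul_apply, botCycle_of_gt (Fin.mk_lt_mk.mpr (by omega))]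
      exact congrArg σ (Fin.ext (by simp only [Fin.val_mk]; omega))
    have h2 : (σ * botCycle (m + 1) (⟨j, by omega⟩ : Fin (m + 1))) ⟨j + 2, by omega⟩
        = σ ⟨j + 1, h1m⟩ := by
      rw [Equiv.Perm.mul_apply, botCycle_of_gt (Fin.mk_lt_mk.mpr (by omega))]
      exact congrArg σ (Fin.ext (by simp only [Fin.val_mk]; omega))
    rw [h0, h1, h2]
  have e2 : Xi (m + 1) (σ * botCycle (m + 1) (⟨j + 1, by omega⟩ : Fin (m + 1))) j
      = if (σ ⟨j, h0m⟩).val < (σ ⟨m, hmm⟩).val ∧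
          (σ ⟨j + 1, h1m⟩).val < (σ ⟨m, hmm⟩).val then (1 : ℝ) else 0 := by
    rw [Xi_eq _ hj2]
    have h0 : (σ * botCycle (m + 1) (⟨j + 1, by omega⟩ : Fin (m + 1))) ⟨j, by omega⟩
        = σ ⟨j, h0m⟩ := by
      rw [Equiv.Perm.mul_apply, botCycle_of_lt (Fin.mk_lt_mk.mpr (by omega))]
    have h1 : (σ * botCycle (m + 1) (⟨j + 1, by omega⟩ : Fin (m + 1))) ⟨j + 1, by omega⟩
        = σ ⟨m, hmm⟩ := by
      rw [Equiv.Perm.mul_apply, botCycle_self]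
    have h2 : (σ * botCycle (m + 1) (⟨j + 1, by omega⟩ : Fin (m + 1))) ⟨j + 2, by omega⟩
        = σ ⟨j + 1, h1m⟩ := by
      rw [Equiv.Perm.mul_apply, botCycle_of_gt (Fin.mk_lt_mk.mpr (by omega))]
      exact congrArg σ (Fin.ext (by simp only [Fin.val_mk]; omega))
    rw [h0, h1, h2]
  have e3 : Xi (m + 1) (σ * botCycle (m + 1) (⟨j + 2, by omega⟩ : Fin (m + 1))) j
      = if (σ ⟨j, h0m⟩).val < (σ ⟨j + 1, h1m⟩).val ∧
          (σ ⟨m, hmm⟩).val < (σ ⟨j + 1, h1m⟩).val then (1 : ℝ) else 0 := by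
    rw [Xi_eq _ hj2]
    have h0 : (σ * botCycle (m + 1) (⟨j + 2, by omega⟩ : Fin (m + 1))) ⟨j, by omega⟩
        = σ ⟨j, h0m⟩ := by
      rw [Equiv.Perm.mul_apply, botCycle_of_lt (Fin.mk_lt_mk.mpr (by omega))]
    have h1 : (σ * botCycle (m + 1) (⟨j + 2, by omega⟩ : Fin (m + 1))) ⟨j + 1, by omega⟩
        = σ ⟨j + 1, h1m⟩ := by
      rw [Equiv.Perm.mul_apply, botCycle_of_lt (Fin.mk_lt_mk.mpr (by omega))]
    have h2 : (σ * botCycle (m + 1) (⟨j + 2, by omega⟩ : Fin (m + 1))) ⟨j + 2, by omega⟩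
        = σ ⟨m, hmm⟩ := by
      rw [Equiv.Perm.mul_apply, botCycle_self]
    rw [h0, h1, h2]
  rw [e1, e2, e3]
  have hAB : (σ ⟨m, hmm⟩).val ≠ (σ ⟨j, h0m⟩).val :=
    hne _ _ (by simp only [ne_eq, Fin.mk.injEq]; omega)
  have hAC : (σ ⟨m, hmm⟩).val ≠ (σ ⟨j + 1, h1m⟩).val :=
    hne _ _ (by simp only [ne_eq, Fin.mk.injEq]; omega)
  have hBC : (σ ⟨j, h0m⟩).val ≠ (σ ⟨j + 1, h1m⟩).val :=
    hne _ _ (by simp only [ne_eq, Fin.mk.injEq]; omega)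
  have htri := tri_aux hAB hAC hBC
  have hcard : ((m + 1 - (j + 3) : ℕ) : ℝ) = ((m + 1 - 3 - j : ℕ) : ℝ) := by
    congr 1
    omega
  rw [hcard]
  linarith [htri]

lemma sum_card_mul (n : ℕ) (f : Equiv.Perm (Fin n) → ℝ) (g : Fin n → Equiv.Perm (Fin n)) :
    ∑ τ : Equiv.Perm (Fin n), ((Finset.univ.filter (fun i : Fin n => τ = g i)).card : ℝ) * f τ =
      ∑ i : Fin n, f (g i) := by
  have h1 : ∀ τ : Equiv.Perm (Fin n),
      ((Finset.univ.filter (fun i : Fin n => τ = g i)).card : ℝ) * f τ =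
        ∑ i : Fin n, (if τ = g i then f τ else 0) := by
    intro τ
    rw [Finset.card_filter]
    push_cast
    rw [Finset.sum_mul]
    apply Finset.sum_congr rfl
    intro i _
    split_ifs <;> ring
  simp_rw [h1]
  rw [Finset.sum_comm]
  apply Finset.sum_congr rfl
  intro i _
  have : ∀ τ : Equiv.Perm (Fin n), (if τ = g i then f τ else 0) = (if τ = g i then f (g i) else 0) := by
    intro τ; split_ifs with h; · rw [h]
    · rfl
  simp_rw [this]
  rw [Finset.sum_ite_eq' Finset.univ (g i) (fun _ => f (g i)), if_pos (Finset.mem_univ _)]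

lemma mulVec_Pq (n : ℕ) (q : ℝ) (f : Equiv.Perm (Fin n) → ℝ) (σ : Equiv.Perm (Fin n)) :
    (Pq n q).mulVec f σ =
      q / n * ∑ i : Fin n, f (σ * Fin.cycleRange i) +
      (1 - q) / n * ∑ i : Fin n, f (σ * botCycle n i) := by
  unfold Matrix.mulVec dotProduct Pq
  simp only [add_mul, mul_assoc]
  rw [Finset.sum_add_distrib, ← Finset.mul_sum, ← Finset.mul_sum,
    sum_card_mul n f (fun i => σ * Fin.cycleRange i),
    sum_card_mul n f (fun i => σ * botCycle n i)]

lemma wgt_top {n : ℕ} (hn : 3 ≤ n) (q : ℝ) : wgt n q ((n - 3) + 1) = 0 := by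
  unfold wgt
  rw [Nat.choose_eq_zero_of_lt (by omega)]
  norm_num

lemma shift_sum {n : ℕ} (hn : 3 ≤ n) (g : ℕ → ℝ) (h0 : g 0 = 0) (htop : g ((n - 3) + 1) = 0) :
    ∑ j ∈ Finset.range (n - 2), g (j + 1) = ∑ j ∈ Finset.range (n - 2), g j := by
  have hr : n - 2 = (n - 3) + 1 := by omega
  rw [hr, Finset.sum_range_succ, Finset.sum_range_succ' g (n - 3), h0, htop]

lemma mulVec_Pq_const {n : ℕ} (hn : 3 ≤ n) (q : ℝ) (σ : Equiv.Perm (Fin n)) :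
    (Pq n q).mulVec (fun _ => (1 : ℝ)) σ = 1 := by
  have hn0 : (n : ℝ) ≠ 0 := Nat.cast_ne_zero.mpr (by omega)
  rw [mulVec_Pq]
  simp only [Finset.sum_const, Finset.card_univ, Fintype.card_fin, nsmul_eq_mul, mul_one]
  field_simp
  ring

lemma step_lemma {n : ℕ} (hn : 3 ≤ n) (q : ℝ) (σ : Equiv.Perm (Fin n)) :
    (Pq n q).mulVec (gpk n q) σ = ((n : ℝ) - 3) / n * gpk n q σ + 1 / n := by
  have hn0 : (n : ℝ) ≠ 0 := Nat.cast_ne_zero.mpr (by omega)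
  rw [mulVec_Pq]
  have hSc : ∑ i : Fin n, gpk n q (σ * Fin.cycleRange i)
      = ∑ j ∈ Finset.range (n - 2),
          wgt n q j * ((j : ℝ) * Xi n σ j + ((n - 3 - j : ℕ) : ℝ) * Xi n σ (j + 1) + 1) := by
    simp_rw [gpk_eq]
    rw [Finset.sum_comm]
    refine Finset.sum_congr rfl fun j hj => ?_
    rw [← Finset.mul_sum, sum_Xc hn σ (Finset.mem_range.mp hj)]
  have hSe : ∑ i : Fin n, gpk n q (σ * botCycle n i)
      = ∑ j ∈ Finset.range (n - 2),
          wgt n q j * ((j : ℝ) * Xi n σ (j - 1) + ((n - 3 - j : ℕ) : ℝ) * Xi n σ j + 1) := by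
    simp_rw [gpk_eq]
    rw [Finset.sum_comm]
    refine Finset.sum_congr rfl fun j hj => ?_
    rw [← Finset.mul_sum, sum_Xe hn σ (Finset.mem_range.mp hj)]
  rw [hSc, hSe, gpk_eq]
  have hW := sum_wgt hn q
  have h1 : ∑ j ∈ Finset.range (n - 2),
        wgt n q j * ((j : ℝ) * Xi n σ j + ((n - 3 - j : ℕ) : ℝ) * Xi n σ (j + 1) + 1)
      = (∑ j ∈ Finset.range (n - 2), (j : ℝ) * wgt n q j * Xi n σ j)
        + ((∑ j ∈ Finset.range (n - 2), ((n - 3 - j : ℕ) : ℝ) * wgt n q j * Xi n σ (j + 1)) + 1) := by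
    have hpt : ∀ j ∈ Finset.range (n - 2),
        wgt n q j * ((j : ℝ) * Xi n σ j + ((n - 3 - j : ℕ) : ℝ) * Xi n σ (j + 1) + 1)
          = (j : ℝ) * wgt n q j * Xi n σ j
            + (((n - 3 - j : ℕ) : ℝ) * wgt n q j * Xi n σ (j + 1) + wgt n q j) :=
      fun j _ => by ring
    rw [Finset.sum_congr rfl hpt, Finset.sum_add_distrib, Finset.sum_add_distrib, hW]
  have h2 : ∑ j ∈ Finset.range (n - 2),
        wgt n q j * ((j : ℝ) * Xi n σ (j - 1) + ((n - 3 - j : ℕ) : ℝ) * Xi n σ j + 1)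
      = (∑ j ∈ Finset.range (n - 2), (j : ℝ) * wgt n q j * Xi n σ (j - 1))
        + ((∑ j ∈ Finset.range (n - 2), ((n - 3 - j : ℕ) : ℝ) * wgt n q j * Xi n σ j) + 1) := by
    have hpt : ∀ j ∈ Finset.range (n - 2),
        wgt n q j * ((j : ℝ) * Xi n σ (j - 1) + ((n - 3 - j : ℕ) : ℝ) * Xi n σ j + 1)
          = (j : ℝ) * wgt n q j * Xi n σ (j - 1)
            + (((n - 3 - j : ℕ) : ℝ) * wgt n q j * Xi n σ j + wgt n q j) :=
      fun j _ => by ring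
    rw [Finset.sum_congr rfl hpt, Finset.sum_add_distrib, Finset.sum_add_distrib, hW]
  have hT1 : q * ∑ j ∈ Finset.range (n - 2), ((n - 3 - j : ℕ) : ℝ) * wgt n q j * Xi n σ (j + 1)
      = (1 - q) * ∑ j ∈ Finset.range (n - 2), (j : ℝ) * wgt n q j * Xi n σ j := by
    rw [Finset.mul_sum, Finset.mul_sum]
    have hpt : ∀ j ∈ Finset.range (n - 2),
        q * (((n - 3 - j : ℕ) : ℝ) * wgt n q j * Xi n σ (j + 1))
          = (fun k : ℕ => (1 - q) * ((k : ℝ) * wgt n q k * Xi n σ k)) (j + 1) := by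
      intro j _
      show q * (((n - 3 - j : ℕ) : ℝ) * wgt n q j * Xi n σ (j + 1))
          = (1 - q) * (((j + 1 : ℕ) : ℝ) * wgt n q (j + 1) * Xi n σ (j + 1))
      linear_combination (-(Xi n σ (j + 1))) * (key_id (n := n) q j)
    have htop' : (fun k : ℕ => (1 - q) * ((k : ℝ) * wgt n q k * Xi n σ k)) ((n - 3) + 1) = 0 := by
      show (1 - q) * (((n - 3 + 1 : ℕ) : ℝ) * wgt n q ((n - 3) + 1) * Xi n σ ((n - 3) + 1)) = 0
      rw [wgt_top hn q]
      ring
    have h0' : (fun k : ℕ => (1 - q) * ((k : ℝ) * wgt n q k * Xi n σ k)) 0 = 0 := by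
      show (1 - q) * (((0 : ℕ) : ℝ) * wgt n q 0 * Xi n σ 0) = 0
      norm_num
    rw [Finset.sum_congr rfl hpt,
      shift_sum hn (fun k : ℕ => (1 - q) * ((k : ℝ) * wgt n q k * Xi n σ k)) h0' htop']
  have hT2 : (1 - q) * ∑ j ∈ Finset.range (n - 2), (j : ℝ) * wgt n q j * Xi n σ (j - 1)
      = q * ∑ j ∈ Finset.range (n - 2), ((n - 3 - j : ℕ) : ℝ) * wgt n q j * Xi n σ j := by
    rw [Finset.mul_sum, Finset.mul_sum]
    have htop' : (fun k : ℕ => (1 - q) * ((k : ℝ) * wgt n q k * Xi n σ (k - 1))) ((n - 3) + 1) = 0 := by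
      show (1 - q) * (((n - 3 + 1 : ℕ) : ℝ) * wgt n q ((n - 3) + 1) * Xi n σ ((n - 3) + 1 - 1)) = 0
      rw [wgt_top hn q]
      ring
    have h0' : (fun k : ℕ => (1 - q) * ((k : ℝ) * wgt n q k * Xi n σ (k - 1))) 0 = 0 := by
      show (1 - q) * (((0 : ℕ) : ℝ) * wgt n q 0 * Xi n σ (0 - 1)) = 0
      norm_num
    rw [show (∑ j ∈ Finset.range (n - 2), (1 - q) * ((j : ℝ) * wgt n q j * Xi n σ (j - 1)))
        = ∑ j ∈ Finset.range (n - 2),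
            (fun k : ℕ => (1 - q) * ((k : ℝ) * wgt n q k * Xi n σ (k - 1))) j
      from Finset.sum_congr rfl fun j _ => rfl]
    rw [← shift_sum hn (fun k : ℕ => (1 - q) * ((k : ℝ) * wgt n q k * Xi n σ (k - 1))) h0' htop']
    refine Finset.sum_congr rfl fun j _ => ?_
    show (1 - q) * (((j + 1 : ℕ) : ℝ) * wgt n q (j + 1) * Xi n σ (j + 1 - 1))
        = q * (((n - 3 - j : ℕ) : ℝ) * wgt n q j * Xi n σ j)
    have hidx : j + 1 - 1 = j := by omega
    rw [hidx]
    linear_combination Xi n σ j * (key_id (n := n) q j)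
  have hab : (∑ j ∈ Finset.range (n - 2), (j : ℝ) * wgt n q j * Xi n σ j)
        + (∑ j ∈ Finset.range (n - 2), ((n - 3 - j : ℕ) : ℝ) * wgt n q j * Xi n σ j)
      = ((n : ℝ) - 3) * ∑ j ∈ Finset.range (n - 2), wgt n q j * Xi n σ j := by
    rw [Finset.mul_sum, ← Finset.sum_add_distrib]
    refine Finset.sum_congr rfl fun j hj => ?_
    rw [Finset.mem_range] at hj
    have hc : ((n - 3 - j : ℕ) : ℝ) = (n : ℝ) - 3 - (j : ℝ) := by
      rw [Nat.cast_sub (by omega : j ≤ n - 3), Nat.cast_sub (by omega : 3 ≤ n)]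
      norm_num
    rw [hc]
    ring
  rw [h1, h2]
  have hgoal : q * ((∑ j ∈ Finset.range (n - 2), (j : ℝ) * wgt n q j * Xi n σ j)
        + ((∑ j ∈ Finset.range (n - 2), ((n - 3 - j : ℕ) : ℝ) * wgt n q j * Xi n σ (j + 1)) + 1))
      + (1 - q) * ((∑ j ∈ Finset.range (n - 2), (j : ℝ) * wgt n q j * Xi n σ (j - 1))
        + ((∑ j ∈ Finset.range (n - 2), ((n - 3 - j : ℕ) : ℝ) * wgt n q j * Xi n σ j) + 1))
      = ((n : ℝ) - 3) * (∑ j ∈ Finset.range (n - 2), wgt n q j * Xi n σ j) + 1 := by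
    linear_combination hT1 + hT2 + hab
  field_simp
  linear_combination hgoal

lemma pow_mulVec_const {n : ℕ} (hn : 3 ≤ n) (q : ℝ) (t : ℕ) :
    ((Pq n q) ^ t).mulVec (fun _ => (1 : ℝ)) = fun _ => 1 := by
  induction t with
  | zero => rw [pow_zero, Matrix.one_mulVec]
  | succ t ih =>
    rw [pow_succ, ← Matrix.mulVec_mulVec,
      show (Pq n q).mulVec (fun _ => (1 : ℝ)) = fun _ => 1 from funext (mulVec_Pq_const hn q), ih]

/-- Starting from the ascending deck, the expected value of the weighted peak
statistic after `t` top-or-bottom-to-random shuffles is `(1 - ((n-3)/n)^t)/3`. -/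
theorem stmt12 (n : ℕ) (hn : 3 ≤ n) (q : ℝ) (hq : q ∈ Set.Icc (0 : ℝ) 1) (t : ℕ) :
    ((Pq n q) ^ t).mulVec (gpk n q) 1 = (1 - (((n : ℝ) - 3) / n) ^ t) * (1 / 3) := by
  have hn0 : (n : ℝ) ≠ 0 := Nat.cast_ne_zero.mpr (by omega)
  induction t with
  | zero =>
    rw [pow_zero, Matrix.one_mulVec, pow_zero]
    have hps : peakSet n 1 = ∅ := by
      ext k
      simp only [peakSet, Finset.mem_filter, Finset.mem_range, Finset.notMem_empty, iff_false]
      rintro ⟨hk, h, h1, h2⟩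
      simp only [Equiv.Perm.one_apply, Fin.mk_lt_mk] at h2
      omega
    unfold gpk
    rw [hps, Finset.sum_empty]
    norm_num
  | succ t ih =>
    rw [pow_succ, ← Matrix.mulVec_mulVec,
      show (Pq n q).mulVec (gpk n q) = fun σ => ((n : ℝ) - 3) / n * gpk n q σ + 1 / n from
        funext (step_lemma hn q)]
    have hsplit : (fun σ => ((n : ℝ) - 3) / n * gpk n q σ + 1 / n)
        = (((n : ℝ) - 3) / n) • gpk n q + (fun _ => (1 / n : ℝ)) := by
      funext σ
      simp [Pi.smul_apply, smul_eq_mul]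
    rw [hsplit, Matrix.mulVec_add, Matrix.mulVec_smul]
    have hconst : ((Pq n q) ^ t).mulVec (fun _ => (1 / n : ℝ)) = fun _ => (1 / (n : ℝ)) := by
      have he : (fun _ : Equiv.Perm (Fin n) => (1 / n : ℝ))
          = (1 / (n : ℝ)) • (fun _ => (1 : ℝ)) := by
        funext
        simp
      rw [he, Matrix.mulVec_smul, pow_mulVec_const hn q]
    rw [Pi.add_apply, hconst, Pi.smul_apply, smul_eq_mul, ih]
    rw [pow_succ]
    field_simp
    ring
end

section
/- Let n ≥ 3, q ∈ [0,1], and let P_q be the top-or-bottom-to-random transition matrix on S_n. Define g : S_n → ℝ by g(σ) = Σ_{i ∈ Peak(σ)} C(n−3, i−1)·q^{i−1}·(1−q)^{n−2−i}. Then the function σ ↦ g(σ) − 1/3 is a right eigenfunction of P_q with eigenvalue (n−3)/n: for every σ ∈ S_n, Σ_{τ ∈ S_n} P_q(σ,τ)·(g(τ) − 1/3) = ((n−3)/n)·(g(σ) − 1/3). -/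
open Finset

section helpers
variable {m : ℕ}

lemma mem_peakSet_iff (σ : Equiv.Perm (Fin (m+1))) {j j1 j2 : ℕ}
    (h1 : j1 = j + 1) (h2 : j2 = j + 2) (hj2 : j2 < m + 1) :
    j ∈ peakSet (m+1) σ ↔
      (σ ⟨j, by omega⟩ < σ ⟨j1, by omega⟩ ∧ σ ⟨j2, hj2⟩ < σ ⟨j1, by omega⟩) := by
  subst h1; subst h2
  constructor
  · intro h
    have h2 := (Finset.mem_filter.mp h).2
    obtain ⟨hh, h3⟩ := h2
    exact h3
  · intro h
    exact Finset.mem_filter.mpr ⟨Finset.mem_range.mpr (by omega), hj2, h⟩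

lemma tc_gt (i : Fin (m+1)) (j : ℕ) (hj : j < m+1) (h : (i : ℕ) < j) :
    Fin.cycleRange i ⟨j, hj⟩ = ⟨j, hj⟩ :=
  Fin.cycleRange_of_gt (by rw [Fin.lt_def]; exact h)

lemma tc_lt (i : Fin (m+1)) (j k : ℕ) (hk : k < m+1) (hjk : k = j + 1) (h : j < (i : ℕ)) :
    Fin.cycleRange i ⟨j, by omega⟩ = ⟨k, hk⟩ := by
  rw [Fin.cycleRange_of_lt (show (⟨j, by omega⟩ : Fin (m+1)) < i by rw [Fin.lt_def]; exact h)]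
  apply Fin.ext
  rw [Fin.val_add_one_of_lt (show (⟨j, by omega⟩ : Fin (m+1)) < Fin.last m by
      rw [Fin.lt_def]; simp; omega)]
  simp [hjk]

lemma tc_eq (i : Fin (m+1)) (j : ℕ) (hj : j < m+1) (h : (i : ℕ) = j) :
    Fin.cycleRange i ⟨j, hj⟩ = ⟨0, by omega⟩ := by
  rw [Fin.cycleRange_of_eq (Fin.ext (by simp [h]))]
  rfl

lemma bc_lt (i : Fin (m+1)) (j : ℕ) (hj : j < m+1) (h : j < (i : ℕ)) :
    botCycle (m+1) i ⟨j, hj⟩ = ⟨j, hj⟩ := by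
  simp only [botCycle, Equiv.Perm.mul_apply, Fin.revPerm_apply]
  rw [Fin.cycleRange_of_gt (by rw [Fin.rev_lt_rev]; rw [Fin.lt_def]; exact h), Fin.rev_rev]

lemma bc_gt (i : Fin (m+1)) (j k : ℕ) (hj : j < m+1) (hk : k + 1 = j) (h : (i : ℕ) < j) :
    botCycle (m+1) i ⟨j, hj⟩ = ⟨k, by omega⟩ := by
  simp only [botCycle, Equiv.Perm.mul_apply, Fin.revPerm_apply]
  have hlt : (⟨j, hj⟩ : Fin (m+1)).rev < i.rev := by
    rw [Fin.rev_lt_rev]; rw [Fin.lt_def]; exact h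
  rw [Fin.cycleRange_of_lt hlt]
  apply Fin.ext
  have h1 : ((⟨j, hj⟩ : Fin (m+1)).rev : ℕ) = m - j := by rw [Fin.val_rev]; simp
  have h2 : ((⟨j, hj⟩ : Fin (m+1)).rev + 1 : Fin (m+1)).val = m - j + 1 := by
    rw [Fin.val_add_one_of_lt] 
    · rw [h1]
    · exact lt_of_lt_of_le hlt (Fin.le_last _)
  rw [Fin.val_rev, h2]
  simp; omega

lemma bc_eq (i : Fin (m+1)) (j : ℕ) (hj : j < m+1) (h : (i : ℕ) = j) :
    botCycle (m+1) i ⟨j, hj⟩ = ⟨m, by omega⟩ := by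
  simp only [botCycle, Equiv.Perm.mul_apply, Fin.revPerm_apply]
  rw [Fin.cycleRange_of_eq (by rw [Fin.ext_iff]; simp [h])]
  apply Fin.ext
  rw [Fin.val_rev]
  simp

lemma max3 {α : Type*} [LinearOrder α] {a b c : α} (hab : a ≠ b) (hac : a ≠ c) (hbc : b ≠ c) :
    (if a < b ∧ c < b then (1:ℝ) else 0) + (if b < a ∧ c < a then (1:ℝ) else 0) +
      (if b < c ∧ a < c then (1:ℝ) else 0) = 1 := by
  rcases hbc.lt_or_gt with h | h
  · rcases hac.lt_or_gt with h2 | h2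
    · rw [if_neg (fun hh => absurd (h.trans hh.2) (lt_irrefl _)),
        if_neg (fun hh => absurd (h2.trans hh.2) (lt_irrefl _)), if_pos ⟨h, h2⟩]
      norm_num
    · rw [if_neg (fun hh => absurd ((h.trans h2).trans hh.1) (lt_irrefl _)),
        if_pos ⟨h.trans h2, h2⟩, if_neg (fun hh => absurd (h2.trans hh.2) (lt_irrefl _))]
      norm_num
  · rcases hab.lt_or_gt with h2 | h2
    · rw [if_pos ⟨h2, h⟩, if_neg (fun hh => absurd (h2.trans hh.1) (lt_irrefl _)),
        if_neg (fun hh => absurd (h.trans hh.1) (lt_irrefl _))]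
      norm_num
    · rw [if_neg (fun hh => absurd (h2.trans hh.1) (lt_irrefl _)),
        if_pos ⟨h2, h.trans h2⟩, if_neg (fun hh => absurd (h.trans hh.1) (lt_irrefl _))]
      norm_num

end helpers

section counting
variable {m : ℕ}

/-- piecewise value of the top-insertion indicator -/
def GT (σ : Equiv.Perm (Fin (m+1))) (j : ℕ) (hj : j + 2 < m + 1) : ℕ → ℝ :=
  fun i =>
    if i < j then (if j ∈ peakSet (m+1) σ then (1:ℝ) else 0)
    else if i = j then
      (if σ ⟨0, by omega⟩ < σ ⟨j+1, by omega⟩ ∧ σ ⟨j+2, hj⟩ < σ ⟨j+1, by omega⟩ then (1:ℝ) else 0)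
    else if i = j+1 then
      (if σ ⟨j+1, by omega⟩ < σ ⟨0, by omega⟩ ∧ σ ⟨j+2, hj⟩ < σ ⟨0, by omega⟩ then (1:ℝ) else 0)
    else if i = j+2 then
      (if σ ⟨j+1, by omega⟩ < σ ⟨j+2, hj⟩ ∧ σ ⟨0, by omega⟩ < σ ⟨j+2, hj⟩ then (1:ℝ) else 0)
    else (if j + 1 ∈ peakSet (m+1) σ then (1:ℝ) else 0)

lemma GT_lt (σ : Equiv.Perm (Fin (m+1))) (j : ℕ) (hj : j + 2 < m + 1) (i : ℕ) (h : i < j) :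
    GT σ j hj i = (if j ∈ peakSet (m+1) σ then (1:ℝ) else 0) := by
  unfold GT; rw [if_pos h]

lemma GT_eq0 (σ : Equiv.Perm (Fin (m+1))) (j : ℕ) (hj : j + 2 < m + 1) (i : ℕ) (h : i = j) :
    GT σ j hj i =
      (if σ ⟨0, by omega⟩ < σ ⟨j+1, by omega⟩ ∧ σ ⟨j+2, hj⟩ < σ ⟨j+1, by omega⟩
        then (1:ℝ) else 0) := by
  unfold GT; rw [if_neg (by omega), if_pos h]

lemma GT_eq1 (σ : Equiv.Perm (Fin (m+1))) (j : ℕ) (hj : j + 2 < m + 1) (i : ℕ) (h : i = j+1) :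
    GT σ j hj i =
      (if σ ⟨j+1, by omega⟩ < σ ⟨0, by omega⟩ ∧ σ ⟨j+2, hj⟩ < σ ⟨0, by omega⟩
        then (1:ℝ) else 0) := by
  unfold GT; rw [if_neg (by omega), if_neg (by omega), if_pos h]

lemma GT_eq2 (σ : Equiv.Perm (Fin (m+1))) (j : ℕ) (hj : j + 2 < m + 1) (i : ℕ) (h : i = j+2) :
    GT σ j hj i =
      (if σ ⟨j+1, by omega⟩ < σ ⟨j+2, hj⟩ ∧ σ ⟨0, by omega⟩ < σ ⟨j+2, hj⟩
        then (1:ℝ) else 0) := by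
  unfold GT; rw [if_neg (by omega), if_neg (by omega), if_neg (by omega), if_pos h]

lemma GT_big (σ : Equiv.Perm (Fin (m+1))) (j : ℕ) (hj : j + 2 < m + 1) (i : ℕ) (h : j + 3 ≤ i) :
    GT σ j hj i = (if j + 1 ∈ peakSet (m+1) σ then (1:ℝ) else 0) := by
  unfold GT; rw [if_neg (by omega), if_neg (by omega), if_neg (by omega), if_neg (by omega)]

lemma top_count (σ : Equiv.Perm (Fin (m+1))) {j : ℕ} (hj : j + 2 < m + 1) :
    ∑ i : Fin (m+1), (if j ∈ peakSet (m+1) (σ * Fin.cycleRange i) then (1:ℝ) else 0) =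
      (j : ℝ) * (if j ∈ peakSet (m+1) σ then (1:ℝ) else 0) +
      ((m + 1 - 3 - j : ℕ) : ℝ) * (if j + 1 ∈ peakSet (m+1) σ then (1:ℝ) else 0) + 1 := by
  have hj1 : j + 1 < m + 1 := by omega
  have hj0 : j < m + 1 := by omega
  have hG : ∀ i : Fin (m+1),
      (if j ∈ peakSet (m+1) (σ * Fin.cycleRange i) then (1:ℝ) else 0) = GT σ j hj (i : ℕ) := by
    intro i
    have hi := i.isLt
    by_cases h1 : (i : ℕ) < j
    · rw [GT_lt σ j hj _ h1]
      refine if_congr ?_ rfl rfl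
      rw [mem_peakSet_iff _ rfl rfl hj, mem_peakSet_iff _ rfl rfl hj]
      simp only [Equiv.Perm.mul_apply]
      rw [tc_gt i j hj0 h1, tc_gt i (j+1) hj1 (by omega), tc_gt i (j+2) hj (by omega)]
    · by_cases h2 : (i : ℕ) = j
      · rw [GT_eq0 σ j hj _ h2]
        refine if_congr ?_ rfl rfl
        rw [mem_peakSet_iff _ rfl rfl hj]
        simp only [Equiv.Perm.mul_apply]
        rw [tc_eq i j hj0 h2, tc_gt i (j+1) hj1 (by omega), tc_gt i (j+2) hj (by omega)]
      · by_cases h3 : (i : ℕ) = j + 1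
        · rw [GT_eq1 σ j hj _ h3]
          refine if_congr ?_ rfl rfl
          rw [mem_peakSet_iff _ rfl rfl hj]
          simp only [Equiv.Perm.mul_apply]
          rw [tc_lt i j (j+1) hj1 rfl (by omega), tc_eq i (j+1) hj1 h3,
            tc_gt i (j+2) hj (by omega)]
        · by_cases h4 : (i : ℕ) = j + 2
          · rw [GT_eq2 σ j hj _ h4]
            refine if_congr ?_ rfl rfl
            rw [mem_peakSet_iff _ rfl rfl hj]
            simp only [Equiv.Perm.mul_apply]
            rw [tc_lt i j (j+1) hj1 rfl (by omega), tc_lt i (j+1) (j+2) hj rfl (by omega),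
              tc_eq i (j+2) hj h4]
          · have h5 : j + 3 ≤ (i : ℕ) := by omega
            have hj3 : j + 3 < m + 1 := by omega
            rw [GT_big σ j hj _ h5]
            refine if_congr ?_ rfl rfl
            rw [mem_peakSet_iff _ rfl rfl hj,
              mem_peakSet_iff σ (show j+2 = (j+1)+1 by omega) (show j+3 = (j+1)+2 by omega) hj3]
            simp only [Equiv.Perm.mul_apply]
            rw [tc_lt i j (j+1) hj1 rfl (by omega), tc_lt i (j+1) (j+2) hj rfl (by omega),
              tc_lt i (j+2) (j+3) hj3 rfl (by omega)]
  rw [Finset.sum_congr rfl (fun i _ => hG i), Fin.sum_univ_eq_sum_range (GT σ j hj) (m+1)]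
  rw [Finset.range_eq_Ico,
    ← Finset.sum_Ico_consecutive (GT σ j hj) (Nat.zero_le (j+3)) (show j + 3 ≤ m + 1 by omega),
    ← Finset.range_eq_Ico, Finset.sum_range_succ, Finset.sum_range_succ, Finset.sum_range_succ]
  have e1 : ∑ i ∈ Finset.range j, GT σ j hj i
      = (j : ℝ) * (if j ∈ peakSet (m+1) σ then (1:ℝ) else 0) := by
    rw [Finset.sum_congr rfl (fun i hi => GT_lt σ j hj i (Finset.mem_range.mp hi)),
      Finset.sum_const, Finset.card_range, nsmul_eq_mul]
  have e2 : ∑ i ∈ Finset.Ico (j+3) (m+1), GT σ j hj i =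
      ((m + 1 - 3 - j : ℕ) : ℝ) * (if j + 1 ∈ peakSet (m+1) σ then (1:ℝ) else 0) := by
    rw [Finset.sum_congr rfl (fun i hi => GT_big σ j hj i (Finset.mem_Ico.mp hi).1),
      Finset.sum_const, Nat.card_Ico, nsmul_eq_mul]
    congr 2
    omega
  have hone : GT σ j hj j + GT σ j hj (j+1) + GT σ j hj (j+2) = 1 := by
    rw [GT_eq0 σ j hj j rfl, GT_eq1 σ j hj (j+1) rfl, GT_eq2 σ j hj (j+2) rfl]
    exact max3
      (by simp only [ne_eq, Equiv.apply_eq_iff_eq, Fin.mk.injEq]; omega)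
      (by simp only [ne_eq, Equiv.apply_eq_iff_eq, Fin.mk.injEq]; omega)
      (by simp only [ne_eq, Equiv.apply_eq_iff_eq, Fin.mk.injEq]; omega)
  rw [e1, e2]
  linarith [hone]

end counting

section counting2
variable {m : ℕ}

/-- piecewise value of the bottom-insertion indicator -/
def GB (σ : Equiv.Perm (Fin (m+1))) (j : ℕ) (hj : j + 2 < m + 1) : ℕ → ℝ :=
  fun i =>
    if i < j then (if j - 1 ∈ peakSet (m+1) σ then (1:ℝ) else 0)
    else if i = j then
      (if σ ⟨m, by omega⟩ < σ ⟨j, by omega⟩ ∧ σ ⟨j+1, by omega⟩ < σ ⟨j, by omega⟩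
        then (1:ℝ) else 0)
    else if i = j+1 then
      (if σ ⟨j, by omega⟩ < σ ⟨m, by omega⟩ ∧ σ ⟨j+1, by omega⟩ < σ ⟨m, by omega⟩
        then (1:ℝ) else 0)
    else if i = j+2 then
      (if σ ⟨j, by omega⟩ < σ ⟨j+1, by omega⟩ ∧ σ ⟨m, by omega⟩ < σ ⟨j+1, by omega⟩
        then (1:ℝ) else 0)
    else (if j ∈ peakSet (m+1) σ then (1:ℝ) else 0)

lemma GB_lt (σ : Equiv.Perm (Fin (m+1))) (j : ℕ) (hj : j + 2 < m + 1) (i : ℕ) (h : i < j) :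
    GB σ j hj i = (if j - 1 ∈ peakSet (m+1) σ then (1:ℝ) else 0) := by
  unfold GB; rw [if_pos h]

lemma GB_eq0 (σ : Equiv.Perm (Fin (m+1))) (j : ℕ) (hj : j + 2 < m + 1) (i : ℕ) (h : i = j) :
    GB σ j hj i =
      (if σ ⟨m, by omega⟩ < σ ⟨j, by omega⟩ ∧ σ ⟨j+1, by omega⟩ < σ ⟨j, by omega⟩
        then (1:ℝ) else 0) := by
  unfold GB; rw [if_neg (by omega), if_pos h]

lemma GB_eq1 (σ : Equiv.Perm (Fin (m+1))) (j : ℕ) (hj : j + 2 < m + 1) (i : ℕ) (h : i = j+1) :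
    GB σ j hj i =
      (if σ ⟨j, by omega⟩ < σ ⟨m, by omega⟩ ∧ σ ⟨j+1, by omega⟩ < σ ⟨m, by omega⟩
        then (1:ℝ) else 0) := by
  unfold GB; rw [if_neg (by omega), if_neg (by omega), if_pos h]

lemma GB_eq2 (σ : Equiv.Perm (Fin (m+1))) (j : ℕ) (hj : j + 2 < m + 1) (i : ℕ) (h : i = j+2) :
    GB σ j hj i =
      (if σ ⟨j, by omega⟩ < σ ⟨j+1, by omega⟩ ∧ σ ⟨m, by omega⟩ < σ ⟨j+1, by omega⟩
        then (1:ℝ) else 0) := by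
  unfold GB; rw [if_neg (by omega), if_neg (by omega), if_neg (by omega), if_pos h]

lemma GB_big (σ : Equiv.Perm (Fin (m+1))) (j : ℕ) (hj : j + 2 < m + 1) (i : ℕ) (h : j + 3 ≤ i) :
    GB σ j hj i = (if j ∈ peakSet (m+1) σ then (1:ℝ) else 0) := by
  unfold GB; rw [if_neg (by omega), if_neg (by omega), if_neg (by omega), if_neg (by omega)]

lemma bot_count (σ : Equiv.Perm (Fin (m+1))) {j : ℕ} (hj : j + 2 < m + 1) :
    ∑ i : Fin (m+1), (if j ∈ peakSet (m+1) (σ * botCycle (m+1) i) then (1:ℝ) else 0) =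
      ((m + 1 - 3 - j : ℕ) : ℝ) * (if j ∈ peakSet (m+1) σ then (1:ℝ) else 0) +
      (j : ℝ) * (if j - 1 ∈ peakSet (m+1) σ then (1:ℝ) else 0) + 1 := by
  have hj1 : j + 1 < m + 1 := by omega
  have hj0 : j < m + 1 := by omega
  have hG : ∀ i : Fin (m+1),
      (if j ∈ peakSet (m+1) (σ * botCycle (m+1) i) then (1:ℝ) else 0) = GB σ j hj (i : ℕ) := by
    intro i
    have hi := i.isLt
    by_cases h1 : (i : ℕ) < j
    · -- positions j, j+1, j+2 all > i, shift down by one: peak at j-1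
      have hj' : j - 1 + 2 < m + 1 := by omega
      rw [GB_lt σ j hj _ h1]
      refine if_congr ?_ rfl rfl
      rw [mem_peakSet_iff _ rfl rfl hj,
        mem_peakSet_iff σ (show j = (j-1)+1 by omega) (show j+1 = (j-1)+2 by omega) hj1]
      simp only [Equiv.Perm.mul_apply]
      rw [bc_gt i j (j-1) hj0 (by omega) (by omega), bc_gt i (j+1) j hj1 (by omega) (by omega),
        bc_gt i (j+2) (j+1) hj (by omega) (by omega)]
    · by_cases h2 : (i : ℕ) = j
      · rw [GB_eq0 σ j hj _ h2]
        refine if_congr ?_ rfl rfl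
        rw [mem_peakSet_iff _ rfl rfl hj]
        simp only [Equiv.Perm.mul_apply]
        rw [bc_eq i j hj0 h2, bc_gt i (j+1) j hj1 (by omega) (by omega),
          bc_gt i (j+2) (j+1) hj (by omega) (by omega)]
      · by_cases h3 : (i : ℕ) = j + 1
        · rw [GB_eq1 σ j hj _ h3]
          refine if_congr ?_ rfl rfl
          rw [mem_peakSet_iff _ rfl rfl hj]
          simp only [Equiv.Perm.mul_apply]
          rw [bc_lt i j hj0 (by omega), bc_eq i (j+1) hj1 h3,
            bc_gt i (j+2) (j+1) hj (by omega) (by omega)]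
        · by_cases h4 : (i : ℕ) = j + 2
          · rw [GB_eq2 σ j hj _ h4]
            refine if_congr ?_ rfl rfl
            rw [mem_peakSet_iff _ rfl rfl hj]
            simp only [Equiv.Perm.mul_apply]
            rw [bc_lt i j hj0 (by omega), bc_lt i (j+1) hj1 (by omega), bc_eq i (j+2) hj h4]
          · have h5 : j + 3 ≤ (i : ℕ) := by omega
            rw [GB_big σ j hj _ h5]
            refine if_congr ?_ rfl rfl
            rw [mem_peakSet_iff _ rfl rfl hj, mem_peakSet_iff σ rfl rfl hj]
            simp only [Equiv.Perm.mul_apply]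
            rw [bc_lt i j hj0 (by omega), bc_lt i (j+1) hj1 (by omega),
              bc_lt i (j+2) hj (by omega)]
  rw [Finset.sum_congr rfl (fun i _ => hG i), Fin.sum_univ_eq_sum_range (GB σ j hj) (m+1)]
  rw [Finset.range_eq_Ico,
    ← Finset.sum_Ico_consecutive (GB σ j hj) (Nat.zero_le (j+3)) (show j + 3 ≤ m + 1 by omega),
    ← Finset.range_eq_Ico, Finset.sum_range_succ, Finset.sum_range_succ, Finset.sum_range_succ]
  have e1 : ∑ i ∈ Finset.range j, GB σ j hj i
      = (j : ℝ) * (if j - 1 ∈ peakSet (m+1) σ then (1:ℝ) else 0) := by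
    rw [Finset.sum_congr rfl (fun i hi => GB_lt σ j hj i (Finset.mem_range.mp hi)),
      Finset.sum_const, Finset.card_range, nsmul_eq_mul]
  have e2 : ∑ i ∈ Finset.Ico (j+3) (m+1), GB σ j hj i =
      ((m + 1 - 3 - j : ℕ) : ℝ) * (if j ∈ peakSet (m+1) σ then (1:ℝ) else 0) := by
    rw [Finset.sum_congr rfl (fun i hi => GB_big σ j hj i (Finset.mem_Ico.mp hi).1),
      Finset.sum_const, Nat.card_Ico, nsmul_eq_mul]
    congr 2
    omega
  have hone : GB σ j hj j + GB σ j hj (j+1) + GB σ j hj (j+2) = 1 := by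
    rw [GB_eq0 σ j hj j rfl, GB_eq1 σ j hj (j+1) rfl, GB_eq2 σ j hj (j+2) rfl]
    exact max3
      (by simp only [ne_eq, Equiv.apply_eq_iff_eq, Fin.mk.injEq]; omega)
      (by simp only [ne_eq, Equiv.apply_eq_iff_eq, Fin.mk.injEq]; omega)
      (by simp only [ne_eq, Equiv.apply_eq_iff_eq, Fin.mk.injEq]; omega)
  rw [e1, e2]
  linarith [hone]

end counting2

section algebra

/-- counting sums against the transition kernel -/
lemma count_sum {n : ℕ} (h : Fin n → Equiv.Perm (Fin n)) (f : Equiv.Perm (Fin n) → ℝ) :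
    ∑ τ : Equiv.Perm (Fin n),
      ((Finset.univ.filter (fun i : Fin n => τ = h i)).card : ℝ) * f τ =
      ∑ i : Fin n, f (h i) := by
  have hcard : ∀ τ : Equiv.Perm (Fin n),
      ((Finset.univ.filter (fun i : Fin n => τ = h i)).card : ℝ) =
        ∑ i : Fin n, (if τ = h i then (1:ℝ) else 0) := by
    intro τ
    rw [Finset.card_filter]
    push_cast
    rfl
  rw [Finset.sum_congr rfl (fun τ _ => by rw [hcard τ, Finset.sum_mul])]
  rw [Finset.sum_comm]
  apply Finset.sum_congr rfl
  intro i _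
  simp [Finset.sum_ite_eq']

/-- binomial weights sum to 1 -/
lemma w_sum (n : ℕ) (hn : 3 ≤ n) (q : ℝ) :
    ∑ j ∈ Finset.range (n-2), ((n - 3).choose j : ℝ) * q ^ j * (1 - q) ^ (n - 3 - j) = 1 := by
  have h2 : n - 2 = (n - 3) + 1 := by omega
  rw [h2]
  calc ∑ j ∈ Finset.range ((n-3)+1), ((n - 3).choose j : ℝ) * q ^ j * (1 - q) ^ (n - 3 - j)
      = ∑ j ∈ Finset.range ((n-3)+1), q ^ j * (1 - q) ^ (n - 3 - j) * ((n - 3).choose j : ℝ) :=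
        Finset.sum_congr rfl (fun j _ => by ring)
    _ = (q + (1 - q)) ^ (n - 3) := (add_pow q (1-q) (n-3)).symm
    _ = 1 := by norm_num

/-- the key binomial weight shift identity -/
lemma w_step (n : ℕ) (q : ℝ) {j : ℕ} (hj : j < n - 3) :
    (1 - q) * (((n - 3).choose (j+1) : ℝ) * q ^ (j+1) * (1 - q) ^ (n - 3 - (j+1)))
        * ((j + 1 : ℕ) : ℝ)
      = q * (((n - 3).choose j : ℝ) * q ^ j * (1 - q) ^ (n - 3 - j)) * ((n - 3 - j : ℕ) : ℝ) := by
  have h1 : (n-3).choose (j+1) * (j+1) = (n-3).choose j * (n - 3 - j) :=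
    Nat.choose_succ_right_eq (n-3) j
  have h1' : (((n-3).choose (j+1) : ℝ)) * ((j+1 : ℕ) : ℝ)
      = ((n-3).choose j : ℝ) * ((n - 3 - j : ℕ) : ℝ) := by exact_mod_cast congrArg Nat.cast h1
  have h3 : (1 - q) ^ (n - 3 - j) = (1 - q) ^ (n - 3 - (j+1)) * (1 - q) := by
    rw [← pow_succ]
    congr 1
    omega
  rw [h3]
  linear_combination ((1 - q) * q ^ (j+1) * (1 - q) ^ (n - 3 - (j+1))) * h1'

end algebra

section shifts

lemma shiftA (n : ℕ) (hn : 3 ≤ n) (q : ℝ) (p : ℕ → ℝ) :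
    ∑ j ∈ Finset.range (n-2),
        q * ((((n-3).choose j : ℝ) * q ^ j * (1-q) ^ (n-3-j)) * (((n-3-j : ℕ):ℝ) * p (j+1)))
      = ∑ j ∈ Finset.range (n-2),
        (1-q) * ((((n-3).choose j : ℝ) * q ^ j * (1-q) ^ (n-3-j)) * ((j:ℝ) * p j)) := by
  have h2 : n - 2 = (n-3) + 1 := by omega
  rw [h2, Finset.sum_range_succ, Finset.sum_range_succ']
  have hpt : ∀ j ∈ Finset.range (n-3),
      (1-q) * ((((n-3).choose (j+1) : ℝ) * q ^ (j+1) * (1-q) ^ (n-3-(j+1)))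
          * (((j+1 : ℕ):ℝ) * p (j+1)))
      = q * ((((n-3).choose j : ℝ) * q ^ j * (1-q) ^ (n-3-j)) * (((n-3-j : ℕ):ℝ) * p (j+1))) := by
    intro j hjr
    have hj : j < n - 3 := Finset.mem_range.mp hjr
    linear_combination (p (j+1)) * w_step n q hj
  rw [Finset.sum_congr rfl hpt]
  simp [Nat.sub_self]

lemma shiftB (n : ℕ) (hn : 3 ≤ n) (q : ℝ) (p : ℕ → ℝ) :
    ∑ j ∈ Finset.range (n-2),
        (1-q) * ((((n-3).choose j : ℝ) * q ^ j * (1-q) ^ (n-3-j)) * ((j:ℝ) * p (j-1)))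
      = ∑ j ∈ Finset.range (n-2),
        q * ((((n-3).choose j : ℝ) * q ^ j * (1-q) ^ (n-3-j)) * (((n-3-j : ℕ):ℝ) * p j)) := by
  have h2 : n - 2 = (n-3) + 1 := by omega
  rw [h2, Finset.sum_range_succ', Finset.sum_range_succ]
  have hpt : ∀ j ∈ Finset.range (n-3),
      (1-q) * ((((n-3).choose (j+1) : ℝ) * q ^ (j+1) * (1-q) ^ (n-3-(j+1)))
          * (((j+1 : ℕ):ℝ) * p (j+1-1)))
      = q * ((((n-3).choose j : ℝ) * q ^ j * (1-q) ^ (n-3-j)) * (((n-3-j : ℕ):ℝ) * p j)) := by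
    intro j hjr
    have hj : j < n - 3 := Finset.mem_range.mp hjr
    have hs : j + 1 - 1 = j := rfl
    rw [hs]
    linear_combination (p j) * w_step n q hj
  rw [Finset.sum_congr rfl hpt]
  simp [Nat.sub_self]

end shifts


lemma combine (n : ℕ) (hn : 3 ≤ n) (q : ℝ) (p : ℕ → ℝ) :
    q * (∑ j ∈ Finset.range (n-2),
        (((n-3).choose j : ℝ) * q ^ j * (1-q) ^ (n-3-j)) *
          ((j:ℝ) * p j + ((n-3-j : ℕ):ℝ) * p (j+1)))
      + (1-q) * (∑ j ∈ Finset.range (n-2),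
        (((n-3).choose j : ℝ) * q ^ j * (1-q) ^ (n-3-j)) *
          (((n-3-j : ℕ):ℝ) * p j + (j:ℝ) * p (j-1)))
    = ((n-3 : ℕ):ℝ) * ∑ j ∈ Finset.range (n-2),
        (((n-3).choose j : ℝ) * q ^ j * (1-q) ^ (n-3-j)) * p j := by
  have e1 : q * (∑ j ∈ Finset.range (n-2),
        (((n-3).choose j : ℝ) * q ^ j * (1-q) ^ (n-3-j)) *
          ((j:ℝ) * p j + ((n-3-j : ℕ):ℝ) * p (j+1)))
      = (∑ j ∈ Finset.range (n-2),
          q * ((((n-3).choose j : ℝ) * q ^ j * (1-q) ^ (n-3-j)) * ((j:ℝ) * p j)))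
        + ∑ j ∈ Finset.range (n-2),
          q * ((((n-3).choose j : ℝ) * q ^ j * (1-q) ^ (n-3-j)) * (((n-3-j : ℕ):ℝ) * p (j+1)))
      := by
    rw [Finset.mul_sum, ← Finset.sum_add_distrib]
    exact Finset.sum_congr rfl fun j _ => by ring
  have e2 : (1-q) * (∑ j ∈ Finset.range (n-2),
        (((n-3).choose j : ℝ) * q ^ j * (1-q) ^ (n-3-j)) *
          (((n-3-j : ℕ):ℝ) * p j + (j:ℝ) * p (j-1)))
      = (∑ j ∈ Finset.range (n-2),
          (1-q) * ((((n-3).choose j : ℝ) * q ^ j * (1-q) ^ (n-3-j)) * (((n-3-j : ℕ):ℝ) * p j)))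
        + ∑ j ∈ Finset.range (n-2),
          (1-q) * ((((n-3).choose j : ℝ) * q ^ j * (1-q) ^ (n-3-j)) * ((j:ℝ) * p (j-1)))
      := by
    rw [Finset.mul_sum, ← Finset.sum_add_distrib]
    exact Finset.sum_congr rfl fun j _ => by ring
  rw [e1, e2, shiftA n hn q p, shiftB n hn q p, Finset.mul_sum, ← Finset.sum_add_distrib,
    ← Finset.sum_add_distrib, ← Finset.sum_add_distrib]
  apply Finset.sum_congr rfl
  intro j hj
  have hle : j ≤ n - 3 := by have := Finset.mem_range.mp hj; omega
  have hcast : ((n-3-j : ℕ):ℝ) = ((n-3:ℕ):ℝ) - (j:ℝ) := Nat.cast_sub hle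
  rw [hcast]
  ring


/-- `σ ↦ g(σ) - 1/3` is a right eigenfunction of the top-or-bottom-to-random
transition matrix with eigenvalue `(n-3)/n`. -/
theorem stmt14 (n : ℕ) (hn : 3 ≤ n) (q : ℝ) (hq : q ∈ Set.Icc (0 : ℝ) 1)
    (σ : Equiv.Perm (Fin n)) :
    ∑ τ : Equiv.Perm (Fin n), Pq n q σ τ * (gpk n q τ - 1 / 3) =
      (((n : ℝ) - 3) / n) * (gpk n q σ - 1 / 3) := by
  obtain ⟨m, rfl⟩ : ∃ m, n = m + 1 := ⟨n - 1, by omega⟩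
  have hm : 3 ≤ m + 1 := hn
  -- gpk as a sum with indicators
  have key : ∀ τ : Equiv.Perm (Fin (m+1)), gpk (m+1) q τ = ∑ j ∈ Finset.range ((m+1)-2),
      (if j ∈ peakSet (m+1) τ then
        (((m+1) - 3).choose j : ℝ) * q ^ j * (1 - q) ^ ((m+1) - 3 - j) else 0) := by
    intro τ
    have hfe : (Finset.range ((m+1)-2)).filter (fun j => j ∈ peakSet (m+1) τ)
        = peakSet (m+1) τ := by
      rw [Finset.filter_mem_eq_inter, Finset.inter_eq_right]
      exact Finset.filter_subset _ _
    rw [gpk, ← hfe, Finset.sum_filter]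
    exact Finset.sum_congr rfl (fun j _ => by rw [hfe])
  -- indicator-weighted sums
  have hite : ∀ (τ : Equiv.Perm (Fin (m+1))) (j : ℕ),
      (if j ∈ peakSet (m+1) τ then
          (((m+1) - 3).choose j : ℝ) * q ^ j * (1 - q) ^ ((m+1) - 3 - j) else 0)
      = ((((m+1) - 3).choose j : ℝ) * q ^ j * (1 - q) ^ ((m+1) - 3 - j)) *
          (if j ∈ peakSet (m+1) τ then (1:ℝ) else 0) := by
    intro τ j
    rw [mul_ite, mul_one, mul_zero]
  -- top sum
  have top : ∑ i : Fin (m+1), gpk (m+1) q (σ * Fin.cycleRange i)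
      = (∑ j ∈ Finset.range ((m+1)-2),
          ((((m+1) - 3).choose j : ℝ) * q ^ j * (1 - q) ^ ((m+1) - 3 - j)) *
            ((j:ℝ) * (if j ∈ peakSet (m+1) σ then (1:ℝ) else 0)
              + (((m+1) - 3 - j : ℕ):ℝ) * (if j+1 ∈ peakSet (m+1) σ then (1:ℝ) else 0))) + 1 := by
    rw [Finset.sum_congr rfl (fun i (_ : i ∈ Finset.univ) => key (σ * Fin.cycleRange i)),
      Finset.sum_comm]
    rw [Finset.sum_congr rfl (fun j (_ : j ∈ Finset.range ((m+1)-2)) =>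
      Finset.sum_congr rfl (fun i (_ : i ∈ Finset.univ) => hite (σ * Fin.cycleRange i) j))]
    rw [Finset.sum_congr rfl (fun j (_ : j ∈ Finset.range ((m+1)-2)) =>
      (Finset.mul_sum _ _ _).symm)]
    rw [Finset.sum_congr rfl (fun j hj => by
      rw [top_count σ (show j + 2 < m + 1 by have := Finset.mem_range.mp hj; omega)])]
    rw [Finset.sum_congr rfl (fun j (_ : j ∈ Finset.range ((m+1)-2)) => by ring :
      ∀ j ∈ Finset.range ((m+1)-2),
        ((((m+1) - 3).choose j : ℝ) * q ^ j * (1 - q) ^ ((m+1) - 3 - j)) *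
          ((j:ℝ) * (if j ∈ peakSet (m+1) σ then (1:ℝ) else 0)
            + (((m+1) - 3 - j : ℕ):ℝ) * (if j+1 ∈ peakSet (m+1) σ then (1:ℝ) else 0) + 1)
        = ((((m+1) - 3).choose j : ℝ) * q ^ j * (1 - q) ^ ((m+1) - 3 - j)) *
          ((j:ℝ) * (if j ∈ peakSet (m+1) σ then (1:ℝ) else 0)
            + (((m+1) - 3 - j : ℕ):ℝ) * (if j+1 ∈ peakSet (m+1) σ then (1:ℝ) else 0))
          + ((((m+1) - 3).choose j : ℝ) * q ^ j * (1 - q) ^ ((m+1) - 3 - j)))]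
    rw [Finset.sum_add_distrib, w_sum (m+1) hm q]
  -- bottom sum
  have bot : ∑ i : Fin (m+1), gpk (m+1) q (σ * botCycle (m+1) i)
      = (∑ j ∈ Finset.range ((m+1)-2),
          ((((m+1) - 3).choose j : ℝ) * q ^ j * (1 - q) ^ ((m+1) - 3 - j)) *
            ((((m+1) - 3 - j : ℕ):ℝ) * (if j ∈ peakSet (m+1) σ then (1:ℝ) else 0)
              + (j:ℝ) * (if j-1 ∈ peakSet (m+1) σ then (1:ℝ) else 0))) + 1 := by
    rw [Finset.sum_congr rfl (fun i (_ : i ∈ Finset.univ) => key (σ * botCycle (m+1) i)),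
      Finset.sum_comm]
    rw [Finset.sum_congr rfl (fun j (_ : j ∈ Finset.range ((m+1)-2)) =>
      Finset.sum_congr rfl (fun i (_ : i ∈ Finset.univ) => hite (σ * botCycle (m+1) i) j))]
    rw [Finset.sum_congr rfl (fun j (_ : j ∈ Finset.range ((m+1)-2)) =>
      (Finset.mul_sum _ _ _).symm)]
    rw [Finset.sum_congr rfl (fun j hj => by
      rw [bot_count σ (show j + 2 < m + 1 by have := Finset.mem_range.mp hj; omega)])]
    rw [Finset.sum_congr rfl (fun j (_ : j ∈ Finset.range ((m+1)-2)) => by ring :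
      ∀ j ∈ Finset.range ((m+1)-2),
        ((((m+1) - 3).choose j : ℝ) * q ^ j * (1 - q) ^ ((m+1) - 3 - j)) *
          ((((m+1) - 3 - j : ℕ):ℝ) * (if j ∈ peakSet (m+1) σ then (1:ℝ) else 0)
            + (j:ℝ) * (if j-1 ∈ peakSet (m+1) σ then (1:ℝ) else 0) + 1)
        = ((((m+1) - 3).choose j : ℝ) * q ^ j * (1 - q) ^ ((m+1) - 3 - j)) *
          ((((m+1) - 3 - j : ℕ):ℝ) * (if j ∈ peakSet (m+1) σ then (1:ℝ) else 0)
            + (j:ℝ) * (if j-1 ∈ peakSet (m+1) σ then (1:ℝ) else 0))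
          + ((((m+1) - 3).choose j : ℝ) * q ^ j * (1 - q) ^ ((m+1) - 3 - j)))]
    rw [Finset.sum_add_distrib, w_sum (m+1) hm q]
  -- expand the transition matrix
  have hPq : ∀ τ : Equiv.Perm (Fin (m+1)), Pq (m+1) q σ τ * (gpk (m+1) q τ - 1/3)
      = (q / ((m+1 : ℕ) : ℝ)) *
          (((Finset.univ.filter
            (fun i : Fin (m+1) => τ = σ * Fin.cycleRange i)).card : ℝ) * (gpk (m+1) q τ - 1/3))
      + ((1-q) / ((m+1 : ℕ) : ℝ)) *
          (((Finset.univ.filter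
            (fun i : Fin (m+1) => τ = σ * botCycle (m+1) i)).card : ℝ) *
              (gpk (m+1) q τ - 1/3)) := by
    intro τ
    rw [Pq]
    ring
  rw [Finset.sum_congr rfl (fun τ (_ : τ ∈ Finset.univ) => hPq τ), Finset.sum_add_distrib,
    ← Finset.mul_sum, ← Finset.mul_sum,
    count_sum (fun i => σ * Fin.cycleRange i) (fun τ => gpk (m+1) q τ - 1/3),
    count_sum (fun i => σ * botCycle (m+1) i) (fun τ => gpk (m+1) q τ - 1/3),
    Finset.sum_sub_distrib, Finset.sum_sub_distrib, top, bot,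
    Finset.sum_const, Finset.card_univ, Fintype.card_fin, nsmul_eq_mul]
  rw [key σ, Finset.sum_congr rfl (fun j (_ : j ∈ Finset.range ((m+1)-2)) => hite σ j)]
  -- the key algebraic identity
  have halg : q * (∑ j ∈ Finset.range ((m+1)-2),
        ((((m+1) - 3).choose j : ℝ) * q ^ j * (1 - q) ^ ((m+1) - 3 - j)) *
          ((j:ℝ) * (if j ∈ peakSet (m+1) σ then (1:ℝ) else 0)
            + (((m+1) - 3 - j : ℕ):ℝ) * (if j+1 ∈ peakSet (m+1) σ then (1:ℝ) else 0)))
      + (1-q) * (∑ j ∈ Finset.range ((m+1)-2),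
        ((((m+1) - 3).choose j : ℝ) * q ^ j * (1 - q) ^ ((m+1) - 3 - j)) *
          ((((m+1) - 3 - j : ℕ):ℝ) * (if j ∈ peakSet (m+1) σ then (1:ℝ) else 0)
            + (j:ℝ) * (if j-1 ∈ peakSet (m+1) σ then (1:ℝ) else 0)))
      = (((m+1) - 3 : ℕ):ℝ) * ∑ j ∈ Finset.range ((m+1)-2),
          ((((m+1) - 3).choose j : ℝ) * q ^ j * (1 - q) ^ ((m+1) - 3 - j)) *
            (if j ∈ peakSet (m+1) σ then (1:ℝ) else 0) :=
    combine (m+1) hm q (fun j => if j ∈ peakSet (m+1) σ then (1:ℝ) else 0)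
  have hM : ((m+1:ℕ):ℝ) ≠ 0 := Nat.cast_ne_zero.mpr (by omega)
  have hK : (((m+1) - 3 : ℕ):ℝ) = ((m+1:ℕ):ℝ) - 3 := by
    rw [Nat.cast_sub hm]
    norm_num
  rw [hK] at halg
  rw [div_mul_eq_mul_div, div_mul_eq_mul_div, div_mul_eq_mul_div, ← add_div,
    div_eq_div_iff hM hM]
  linear_combination ((m+1:ℕ):ℝ) * halg
end

section
/- Let n ≥ 2 and a ≥ 1 be integers and let P_a be the a-handed riffle shuffle transition matrix on S_n. Then for every integer t ≥ 0, the entry of the vector P_a^t · pk at the identity permutation equals (1 − a^{−2t})·(n−2)/3, where pk : S_n → ℚ is the number-of-peaks function. (In words: if a deck of n distinct cards starts in ascending order, then after t iterations of the a-handed shuffle the expected number of peaks is (1 − a^{−2t})(n−2)/3.) -/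
open Finset

/-- 0-indexed descent set of a deck arrangement: `i ∈ desSet n σ` iff the card at
position `i` is greater than the card at position `i+1` (positions `0, …, n-2`). -/
def desSet (n : ℕ) (σ : Equiv.Perm (Fin n)) : Finset ℕ :=
  (Finset.range (n - 1)).filter
    (fun i => ∃ h : i + 1 < n, σ ⟨i + 1, h⟩ < σ ⟨i, Nat.lt_of_succ_lt h⟩)

/-- `des σ` is the number of descents of `σ`. -/
def des (n : ℕ) (σ : Equiv.Perm (Fin n)) : ℕ := (desSet n σ).card

/-- Bayer–Diaconis `a`-handed riffle shuffle transition matrix on `S_n`: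
`Pa n a σ τ = C(n + a - 1 - des(τ⁻¹∘σ), n) / a^n`. -/
def Pa (n a : ℕ) : Matrix (Equiv.Perm (Fin n)) (Equiv.Perm (Fin n)) ℚ :=
  fun σ τ => ((n + a - 1 - des n (τ⁻¹ * σ)).choose n : ℚ) / (a : ℚ) ^ n


theorem Equiv.Perm.apply_inv_self {α : Type*} (f : Equiv.Perm α) (x : α) : f (f⁻¹ x) = x :=
  f.apply_symm_apply x

theorem Equiv.Perm.inv_apply_self {α : Type*} (f : Equiv.Perm α) (x : α) : f⁻¹ (f x) = x :=
  f.symm_apply_apply x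

section SortLemmas

variable {n : ℕ}

lemma graph_lt_iff {c : ℕ} (w : Fin n → Fin c) (p q : Fin n) :
    Tuple.graphEquiv₁ w p < Tuple.graphEquiv₁ w q ↔ (w p < w q ∨ (w p = w q ∧ p < q)) := by
  rw [show Tuple.graphEquiv₁ w p = ⟨toLex (w p, p), by simp [Tuple.graph]; exact Finset.mem_image.mpr ⟨p, Finset.mem_univ _, rfl⟩⟩ from rfl,
    show Tuple.graphEquiv₁ w q = ⟨toLex (w q, q), by simp [Tuple.graph]; exact Finset.mem_image.mpr ⟨q, Finset.mem_univ _, rfl⟩⟩ from rfl,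
    Subtype.mk_lt_mk, Prod.Lex.lt_iff]
  exact Iff.rfl

lemma strictMono_fin {β : Type*} [Preorder β] (f : Fin n → β)
    (H : ∀ i (hi : i + 1 < n), f ⟨i, Nat.lt_of_succ_lt hi⟩ < f ⟨i + 1, hi⟩) :
    StrictMono f := by
  have key : ∀ k (i : ℕ) (hi : i < n) (hik : i + k + 1 < n),
      f ⟨i, hi⟩ < f ⟨i + k + 1, hik⟩ := by
    intro k
    induction k with
    | zero => intro i hi hik; exact H i hik
    | succ k ih =>
      intro i hi hik
      exact (ih i hi (by omega)).trans (by
        have := H (i + k + 1) (by omega)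
        convert this using 3 <;> omega)
  intro a b hab
  have : (b : ℕ) = a + ((b : ℕ) - a - 1) + 1 := by
    have : (a : ℕ) < b := hab
    omega
  have hb : b = ⟨a + ((b : ℕ) - a - 1) + 1, by omega⟩ := Fin.ext this
  rw [hb]
  exact key _ _ a.isLt _

/-- Characterization of `Tuple.sort w = ρ` by consecutive comparisons. -/
lemma sort_eq_iff_consec {c : ℕ} (w : Fin n → Fin c) (ρ : Equiv.Perm (Fin n)) :
    Tuple.sort w = ρ ↔ ∀ i (hi : i + 1 < n),
      (w (ρ ⟨i, Nat.lt_of_succ_lt hi⟩) < w (ρ ⟨i + 1, hi⟩) ∨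
        (w (ρ ⟨i, Nat.lt_of_succ_lt hi⟩) = w (ρ ⟨i + 1, hi⟩) ∧
          ρ ⟨i, Nat.lt_of_succ_lt hi⟩ < ρ ⟨i + 1, hi⟩)) := by
  rw [eq_comm, Tuple.eq_sort_iff']
  constructor
  · intro h i hi
    have := h (show (⟨i, Nat.lt_of_succ_lt hi⟩ : Fin n) < ⟨i + 1, hi⟩ from by
      simp [Fin.lt_def])
    rwa [Equiv.trans_apply, Equiv.trans_apply, graph_lt_iff] at this
  · intro h
    apply strictMono_fin
    intro i hi
    rw [Equiv.trans_apply, Equiv.trans_apply, graph_lt_iff]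
    exact h i hi

lemma sort_graph_strictMono {c : ℕ} (w : Fin n → Fin c) {i j : Fin n} (hij : i < j) :
    w (Tuple.sort w i) < w (Tuple.sort w j) ∨
      (w (Tuple.sort w i) = w (Tuple.sort w j) ∧ Tuple.sort w i < Tuple.sort w j) := by
  have h := Tuple.eq_sort_iff'.mp (rfl : Tuple.sort w = Tuple.sort w)
  have := h hij
  rwa [Equiv.trans_apply, Equiv.trans_apply, graph_lt_iff] at this

lemma inv_sort_lt_iff {c : ℕ} (w : Fin n → Fin c) (p q : Fin n) :
    (Tuple.sort w)⁻¹ p < (Tuple.sort w)⁻¹ q ↔ (w p < w q ∨ (w p = w q ∧ p < q)) := by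
  have h := Tuple.eq_sort_iff'.mp (rfl : Tuple.sort w = Tuple.sort w)
  have := h.lt_iff_lt (a := (Tuple.sort w)⁻¹ p) (b := (Tuple.sort w)⁻¹ q)
  rw [Equiv.trans_apply, Equiv.trans_apply, graph_lt_iff] at this
  rw [← this]
  simp [Equiv.Perm.apply_inv_self]

end SortLemmas

section Des

variable {n : ℕ} (ρ : Equiv.Perm (Fin n))

lemma mem_desSet {i : ℕ} :
    i ∈ desSet n ρ ↔ ∃ h : i + 1 < n, ρ ⟨i + 1, h⟩ < ρ ⟨i, Nat.lt_of_succ_lt h⟩ := by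
  simp only [desSet, Finset.mem_filter, Finset.mem_range, and_iff_right_iff_imp]
  rintro ⟨h, -⟩; omega

/-- number of descents strictly below `i` -/
def dsc (i : ℕ) : ℕ := ((desSet n ρ).filter (· < i)).card

lemma dsc_le_self (i : ℕ) : dsc ρ i ≤ i := by
  have : (desSet n ρ).filter (· < i) ⊆ Finset.range i := by
    intro j hj
    simp only [Finset.mem_filter] at hj
    exact Finset.mem_range.mpr hj.2
  simpa [dsc] using (Finset.card_le_card this).trans_eq (Finset.card_range i)

lemma dsc_le_des (i : ℕ) : dsc ρ i ≤ des n ρ :=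
  Finset.card_le_card (Finset.filter_subset _ _)

lemma des_le_dsc_add (i : ℕ) : des n ρ ≤ dsc ρ i + (n - 1 - i) := by
  have key := Finset.card_filter_add_card_filter_not
    (s := desSet n ρ) (p := (· < i))
  have h2 : ((desSet n ρ).filter (fun j => ¬ j < i)).card ≤ n - 1 - i := by
    have hsub : (desSet n ρ).filter (fun j => ¬ j < i) ⊆ Finset.Ico i (n - 1) := by
      intro j hj
      simp only [Finset.mem_filter, desSet, Finset.mem_range, not_lt] at hj
      exact Finset.mem_Ico.mpr ⟨hj.2, hj.1.1⟩
    simpa [Nat.card_Ico] using Finset.card_le_card hsub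
  have hd : dsc ρ i = ((desSet n ρ).filter (· < i)).card := rfl
  unfold des
  omega

lemma dsc_succ_of_mem {i : ℕ} (hi : i ∈ desSet n ρ) : dsc ρ (i + 1) = dsc ρ i + 1 := by
  have hsplit : (desSet n ρ).filter (· < i + 1) =
      insert i ((desSet n ρ).filter (· < i)) := by
    ext j
    simp only [Finset.mem_filter, Finset.mem_insert]
    constructor
    · rintro ⟨hj, hlt⟩
      rcases Nat.lt_succ_iff_lt_or_eq.mp hlt with h | h
      · exact Or.inr ⟨hj, h⟩
      · exact Or.inl h
    · rintro (rfl | ⟨hj, hlt⟩)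
      · exact ⟨hi, Nat.lt_succ_self _⟩
      · exact ⟨hj, Nat.lt_succ_of_lt hlt⟩
  rw [dsc, hsplit, Finset.card_insert_of_notMem (by simp)]
  rfl

lemma dsc_succ_of_not_mem {i : ℕ} (hi : i ∉ desSet n ρ) : dsc ρ (i + 1) = dsc ρ i := by
  have hsplit : (desSet n ρ).filter (· < i + 1) = (desSet n ρ).filter (· < i) := by
    ext j
    simp only [Finset.mem_filter]
    constructor
    · rintro ⟨hj, hlt⟩
      rcases Nat.lt_succ_iff_lt_or_eq.mp hlt with h | h
      · exact ⟨hj, h⟩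
      · exact absurd (h ▸ hj) hi
    · rintro ⟨hj, hlt⟩
      exact ⟨hj, Nat.lt_succ_of_lt hlt⟩
  rw [dsc, hsplit]; rfl

end Des

theorem card_strictMono_fn (N m : ℕ) :
    Fintype.card {h : Fin N → Fin m // StrictMono h} = m.choose N := by
  have e : {h : Fin N → Fin m // StrictMono h} ≃
      {s // s ∈ Finset.powersetCard N (Finset.univ : Finset (Fin m))} := by
    refine
      { toFun := fun h => ⟨Finset.image h.1 Finset.univ, ?_⟩
        invFun := fun s => ⟨fun i => Finset.orderEmbOfFin s.1
            ((Finset.mem_powersetCard.mp s.2).2) i,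
          (Finset.orderEmbOfFin _ _).strictMono⟩
        left_inv := ?_
        right_inv := ?_ }
    · apply Finset.mem_powersetCard.mpr
      refine ⟨Finset.subset_univ _, ?_⟩
      rw [Finset.card_image_of_injective _ h.2.injective, Finset.card_univ, Fintype.card_fin]
    · rintro ⟨h, hh⟩
      apply Subtype.ext
      funext i
      exact (congrFun (Finset.orderEmbOfFin_unique _
        (fun x => Finset.mem_image_of_mem _ (Finset.mem_univ x)) hh) i).symm
    · rintro ⟨s, hs⟩
      apply Subtype.ext
      apply Finset.coe_injective
      rw [Finset.coe_image, Finset.coe_univ, Set.image_univ]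
      exact Finset.range_orderEmbOfFin _ _
  rw [Fintype.card_congr e, Fintype.card_coe, Finset.card_powersetCard, Finset.card_univ,
    Fintype.card_fin]

lemma strictMono_gap {N m : ℕ} {h : Fin N → Fin m} (hh : StrictMono h) :
    ∀ i j : Fin N, (i : ℕ) ≤ j → (h i : ℕ) + ((j : ℕ) - i) ≤ h j := by
  have key : ∀ k (i j : Fin N), (j : ℕ) = i + k → (h i : ℕ) + k ≤ h j := by
    intro k
    induction k with
    | zero =>
      intro i j hj
      have : i = j := Fin.ext (by omega)
      subst this; simp
    | succ k ih =>
      intro i j hj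
      have hj' : (i : ℕ) + k < N := by have := j.isLt; omega
      have h1 := ih i ⟨i + k, hj'⟩ rfl
      have h2 : h ⟨(i : ℕ) + k, hj'⟩ < h j := hh (by simp [Fin.lt_def]; omega)
      have h2' : (h ⟨(i : ℕ) + k, hj'⟩ : ℕ) < h j := h2
      omega
  intro i j hij
  exact key ((j : ℕ) - i) i j (by omega) |>.trans_eq' (by omega) |>.trans_eq (by rfl)

lemma strictMono_le_apply {N m : ℕ} {h : Fin N → Fin m} (hh : StrictMono h) (i : Fin N) :
    (i : ℕ) ≤ h i := by
  have := strictMono_gap hh ⟨0, i.pos⟩ i (by simp)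
  simp only [] at this
  omega

section Fiber

variable {n c : ℕ} (ρ : Equiv.Perm (Fin n))

lemma des_le (hn : 0 < n) : des n ρ ≤ n - 1 := by
  have : desSet n ρ ⊆ Finset.range (n - 1) := Finset.filter_subset _ _
  simpa [des] using (Finset.card_le_card this).trans_eq (Finset.card_range _)

lemma fwd_bound (hc : 1 ≤ c) (w : Fin n → Fin c) (i : Fin n) :
    (w (ρ i) : ℕ) + ((i : ℕ) - dsc ρ i) < n + c - 1 - des n ρ := by
  have h1 := (w (ρ i)).isLt
  have h2 := dsc_le_self ρ i
  have h3 := dsc_le_des ρ i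
  have h4 := des_le_dsc_add ρ i
  have h5 := i.isLt
  omega

/-- forward map of the fiber equivalence -/
def fwdF (hc : 1 ≤ c) (w : Fin n → Fin c) : Fin n → Fin (n + c - 1 - des n ρ) :=
  fun i => ⟨(w (ρ i) : ℕ) + ((i : ℕ) - dsc ρ i), fwd_bound ρ hc w i⟩

lemma fwdF_strictMono (hc : 1 ≤ c) (w : Fin n → Fin c) (hw : Tuple.sort w = ρ) :
    StrictMono (fwdF ρ hc w) := by
  apply strictMono_fin
  intro i hi
  have consec := (sort_eq_iff_consec w ρ).mp hw i hi
  simp only [fwdF, Fin.lt_def]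
  by_cases hmem : i ∈ desSet n ρ
  · have hsucc := dsc_succ_of_mem ρ hmem
    obtain ⟨h', hlt⟩ := (mem_desSet ρ).mp hmem
    have hwlt : (w (ρ ⟨i, Nat.lt_of_succ_lt hi⟩) : ℕ) < w (ρ ⟨i + 1, hi⟩) :=
      consec.resolve_right (by rintro ⟨-, hcon⟩; exact absurd hcon (lt_asymm hlt))
    have h2 := dsc_le_self ρ i
    omega
  · have hsucc := dsc_succ_of_not_mem ρ hmem
    have hwle : (w (ρ ⟨i, Nat.lt_of_succ_lt hi⟩) : ℕ) ≤ w (ρ ⟨i + 1, hi⟩) := by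
      rcases consec with h | ⟨h, -⟩
      · exact le_of_lt h
      · exact le_of_eq (congrArg _ h)
    have h2 := dsc_le_self ρ i
    omega

lemma bwd_bound (hc : 1 ≤ c) (h : Fin n → Fin (n + c - 1 - des n ρ))
    (hh : StrictMono h) (p : Fin n) :
    (h (ρ⁻¹ p) : ℕ) - (((ρ⁻¹ p : Fin n) : ℕ) - dsc ρ (ρ⁻¹ p)) < c := by
  set i : Fin n := ρ⁻¹ p with hi
  have hnpos : 0 < n := i.pos
  have h1 := strictMono_gap hh i ⟨n - 1, by omega⟩ (by simp; have := i.isLt; omega)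
  have h2 := (h ⟨n - 1, by omega⟩).isLt
  have h3 := dsc_le_self ρ i
  have h4 := dsc_le_des ρ i
  have h5 := des_le_dsc_add ρ i
  have h6 := i.isLt
  have h7 := des_le ρ hnpos
  simp only [] at h1 h2 ⊢
  omega

/-- backward map of the fiber equivalence -/
def bwdF (hc : 1 ≤ c) (h : Fin n → Fin (n + c - 1 - des n ρ)) (hh : StrictMono h) :
    Fin n → Fin c :=
  fun p => ⟨(h (ρ⁻¹ p) : ℕ) - (((ρ⁻¹ p : Fin n) : ℕ) - dsc ρ (ρ⁻¹ p)), bwd_bound ρ hc h hh p⟩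

lemma bwdF_sort (hc : 1 ≤ c) (h : Fin n → Fin (n + c - 1 - des n ρ)) (hh : StrictMono h) :
    Tuple.sort (bwdF ρ hc h hh) = ρ := by
  apply (sort_eq_iff_consec _ ρ).mpr
  intro i hi
  simp only [bwdF, Equiv.Perm.inv_apply_self]
  set i₀ : Fin n := ⟨i, Nat.lt_of_succ_lt hi⟩ with hi₀
  set i₁ : Fin n := ⟨i + 1, hi⟩ with hi₁
  have hstep : (h i₀ : ℕ) < h i₁ := hh (by simp [hi₀, hi₁, Fin.lt_def])
  have hle0 := strictMono_le_apply hh i₀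
  have hle1 := strictMono_le_apply hh i₁
  have h2 := dsc_le_self ρ i
  by_cases hmem : i ∈ desSet n ρ
  · have hsucc := dsc_succ_of_mem ρ hmem
    left
    simp only [Fin.lt_def, hi₀, hi₁] at *
    omega
  · have hsucc := dsc_succ_of_not_mem ρ hmem
    have hvals : (h i₀ : ℕ) - ((i : ℕ) - dsc ρ i) < (h i₁ : ℕ) - ((i + 1 : ℕ) - dsc ρ (i + 1)) ∨
        (h i₀ : ℕ) - ((i : ℕ) - dsc ρ i) = (h i₁ : ℕ) - ((i + 1 : ℕ) - dsc ρ (i + 1)) := by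
      simp only [hi₀, hi₁] at *
      omega
    rcases hvals with hv | hv
    · left
      simp only [Fin.lt_def, hi₀, hi₁] at *
      exact hv
    · right
      constructor
      · apply Fin.ext
        simp only [hi₀, hi₁] at *
        exact hv
      · have hne : ρ i₀ ≠ ρ i₁ := by
          intro hcon
          have := ρ.injective hcon
          simp [hi₀, hi₁, Fin.ext_iff] at this
        have hnlt : ¬ ρ i₁ < ρ i₀ := fun hcon => hmem ((mem_desSet ρ).mpr ⟨hi, hcon⟩)
        exact lt_of_le_of_ne (le_of_not_gt hnlt) hne

theorem card_sort_fiber (hc : 1 ≤ c) :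
    Fintype.card {w : Fin n → Fin c // Tuple.sort w = ρ} = (n + c - 1 - des n ρ).choose n := by
  have hcongr :
      {w : Fin n → Fin c // Tuple.sort w = ρ} ≃
        {h : Fin n → Fin (n + c - 1 - des n ρ) // StrictMono h} :=
    { toFun := fun w => ⟨fwdF ρ hc w.1, fwdF_strictMono ρ hc w.1 w.2⟩
      invFun := fun h => ⟨bwdF ρ hc h.1 h.2, bwdF_sort ρ hc h.1 h.2⟩
      left_inv := by
        rintro ⟨w, hw⟩
        apply Subtype.ext
        funext p
        apply Fin.ext
        simp only [fwdF, bwdF, Equiv.Perm.apply_inv_self]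
        omega
      right_inv := by
        rintro ⟨h, hh⟩
        apply Subtype.ext
        funext i
        apply Fin.ext
        simp only [fwdF, bwdF, Equiv.Perm.inv_apply_self]
        have hle := strictMono_le_apply hh i
        have h2 := dsc_le_self ρ i
        omega }
  rw [Fintype.card_congr hcongr, card_strictMono_fn]

end Fiber


/-- number of `c`-ary words whose stable sort permutation is `ρ` -/
def Na (n c : ℕ) (ρ : Equiv.Perm (Fin n)) : ℕ :=
  Fintype.card {w : Fin n → Fin c // Tuple.sort w = ρ}

lemma Pa_apply {n a : ℕ} (ha : 1 ≤ a) (σ τ : Equiv.Perm (Fin n)) :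
    Pa n a σ τ = (Na n a (τ⁻¹ * σ) : ℚ) / (a : ℚ) ^ n := by
  rw [Pa, Na, card_sort_fiber _ ha]

lemma one_lt_of_ne_one' {n : ℕ} {ρ : Equiv.Perm (Fin n)} (hρ : ρ ≠ 1) :
    1 ≤ des n ρ ∧ 1 ≤ n := by
  by_cases hd : des n ρ = 0
  · exfalso
    apply hρ
    have hempty : desSet n ρ = ∅ := Finset.card_eq_zero.mp hd
    have h1 : Tuple.sort (fun i : Fin n => i) = ρ := by
      apply (sort_eq_iff_consec _ ρ).mpr
      intro i hi
      left
      have hne : ρ ⟨i, Nat.lt_of_succ_lt hi⟩ ≠ ρ ⟨i + 1, hi⟩ := by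
        intro hcon
        have := ρ.injective hcon
        simp [Fin.ext_iff] at this
      have hnlt : ¬ ρ ⟨i + 1, hi⟩ < ρ ⟨i, Nat.lt_of_succ_lt hi⟩ := by
        intro hcon
        have : i ∈ desSet n ρ := (mem_desSet ρ).mpr ⟨hi, hcon⟩
        simp [hempty] at this
      exact lt_of_le_of_ne (le_of_not_gt hnlt) hne
    have h2 : Tuple.sort (fun i : Fin n => i) = 1 := by
      apply (sort_eq_iff_consec _ 1).mpr
      intro i hi
      left
      simp [Fin.lt_def]
    rw [← h1, h2]
  · have hd' : des n ρ = (desSet n ρ).card := rfl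
    refine ⟨by omega, ?_⟩
    obtain ⟨i, hi⟩ := Finset.card_pos.mp (by omega : 0 < (desSet n ρ).card)
    obtain ⟨h, -⟩ := (mem_desSet ρ).mp hi
    omega

lemma Pa_one {n : ℕ} : Pa n 1 = 1 := by
  ext σ τ
  rw [Pa, Matrix.one_apply]
  by_cases h : σ = τ
  · have hρ : τ⁻¹ * σ = 1 := by rw [h, inv_mul_cancel]
    have hdes : des n (1 : Equiv.Perm (Fin n)) = 0 := by
      have : desSet n (1 : Equiv.Perm (Fin n)) = ∅ := by
        apply Finset.eq_empty_iff_forall_notMem.mpr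
        intro i hi
        obtain ⟨hlt, hcon⟩ := (mem_desSet _).mp hi
        simp [Fin.lt_def] at hcon
      simp [des, this]
    rw [hρ, hdes]
    simp [h]
  · have hρ : τ⁻¹ * σ ≠ 1 := by
      intro hcon
      exact h (inv_mul_eq_one.mp hcon).symm
    obtain ⟨hd, hn⟩ := one_lt_of_ne_one' hρ
    rw [if_neg (fun hc => h hc)]
    have : n + 1 - 1 - des n (τ⁻¹ * σ) < n := by omega
    rw [Nat.choose_eq_zero_of_lt this]
    simp

section Mul

variable {n a b : ℕ}

/-- combine an `a`-ary and a `b`-ary word into an `a*b`-ary word whose sort is the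
composition of the sorts -/
def phiW (u : Fin n → Fin a) (v : Fin n → Fin b) : Fin n → Fin (a * b) :=
  fun j => ⟨(u ((Tuple.sort v)⁻¹ j) : ℕ) * b + (v j : ℕ), by
    have h1 := (u ((Tuple.sort v)⁻¹ j)).isLt
    have h2 := (v j).isLt
    have h3 : ((u ((Tuple.sort v)⁻¹ j) : ℕ) + 1) * b ≤ a * b :=
      Nat.mul_le_mul_right _ h1
    rw [Nat.succ_mul] at h3
    omega⟩

lemma sort_phiW (u : Fin n → Fin a) (v : Fin n → Fin b) :
    Tuple.sort (phiW u v) = Tuple.sort v * Tuple.sort u := by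
  refine (Tuple.eq_sort_iff'.mpr ?_).symm
  intro i j hij
  rw [Equiv.trans_apply, Equiv.trans_apply, graph_lt_iff]
  have hval : ∀ k : Fin n, (phiW u v ((Tuple.sort v * Tuple.sort u) k) : ℕ) =
      (u (Tuple.sort u k) : ℕ) * b + (v (Tuple.sort v (Tuple.sort u k)) : ℕ) := by
    intro k
    simp [phiW, Equiv.Perm.mul_apply, Equiv.Perm.inv_apply_self]
  rcases sort_graph_strictMono u hij with hu | ⟨hequ, hltu⟩
  · left
    rw [Fin.lt_def, hval i, hval j]
    have h3 : ((u (Tuple.sort u i) : ℕ) + 1) * b ≤ (u (Tuple.sort u j) : ℕ) * b :=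
      Nat.mul_le_mul_right _ hu
    have h2 := (v (Tuple.sort v (Tuple.sort u i))).isLt
    rw [Nat.succ_mul] at h3
    omega
  · rcases sort_graph_strictMono v hltu with hv | ⟨heqv, hltv⟩
    · left
      rw [Fin.lt_def, hval i, hval j, hequ]
      have : (v (Tuple.sort v (Tuple.sort u i)) : ℕ) < v (Tuple.sort v (Tuple.sort u j)) := hv
      omega
    · right
      constructor
      · apply Fin.ext
        rw [hval i, hval j, hequ, heqv]
      · exact hltv

/-- second component of the inverse of `phiW` -/
def vOf (hb : 0 < b) (w : Fin n → Fin (a * b)) : Fin n → Fin b :=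
  fun j => ⟨(w j : ℕ) % b, Nat.mod_lt _ hb⟩

/-- first component of the inverse of `phiW` -/
def uOf (hb : 0 < b) (w : Fin n → Fin (a * b)) : Fin n → Fin a :=
  fun x => ⟨(w (Tuple.sort (vOf hb w) x) : ℕ) / b, by
    have h1 := (w (Tuple.sort (vOf hb w) x)).isLt
    exact Nat.div_lt_of_lt_mul (lt_of_lt_of_eq h1 (mul_comm a b))⟩

lemma phiW_recon (hb : 0 < b) (w : Fin n → Fin (a * b)) :
    phiW (uOf hb w) (vOf hb w) = w := by
  funext j
  apply Fin.ext
  simp only [phiW, uOf, vOf, Equiv.Perm.apply_inv_self]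
  exact Nat.div_add_mod' _ _

lemma vOf_phiW (hb : 0 < b) (u : Fin n → Fin a) (v : Fin n → Fin b) :
    vOf hb (phiW u v) = v := by
  funext j
  apply Fin.ext
  simp only [vOf, phiW]
  rw [Nat.mul_add_mod', Nat.mod_eq_of_lt (v j).isLt]

lemma uOf_phiW (hb : 0 < b) (u : Fin n → Fin a) (v : Fin n → Fin b) :
    uOf hb (phiW u v) = u := by
  funext x
  apply Fin.ext
  simp only [uOf, vOf_phiW hb u v, phiW, Equiv.Perm.inv_apply_self]
  rw [add_comm, Nat.add_mul_div_right _ _ hb, Nat.div_eq_of_lt (v (Tuple.sort v x)).isLt,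
    Nat.zero_add]


def E2lem (μ : Equiv.Perm (Fin n)) :
    ((π : Equiv.Perm (Fin n)) ×
      ({u : Fin n → Fin a // Tuple.sort u = π⁻¹ * μ} ×
        {v : Fin n → Fin b // Tuple.sort v = π})) ≃
    {p : (Fin n → Fin a) × (Fin n → Fin b) //
      Tuple.sort p.2 * Tuple.sort p.1 = μ} where
  toFun x := ⟨(x.2.1.1, x.2.2.1), by rw [x.2.1.2, x.2.2.2, mul_inv_cancel_left]⟩
  invFun p := ⟨Tuple.sort p.1.2,
    ⟨p.1.1, eq_inv_mul_iff_mul_eq.mpr p.2⟩, ⟨p.1.2, rfl⟩⟩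
  left_inv := by
    rintro ⟨π, ⟨u, hu⟩, ⟨v, hv⟩⟩
    subst hv
    rfl
  right_inv := by
    rintro ⟨⟨u, v⟩, h⟩
    rfl

def E3lem (hb : 0 < b) (μ : Equiv.Perm (Fin n)) :
    {p : (Fin n → Fin a) × (Fin n → Fin b) // Tuple.sort p.2 * Tuple.sort p.1 = μ} ≃
    {w : Fin n → Fin (a * b) // Tuple.sort w = μ} where
  toFun p := ⟨phiW p.1.1 p.1.2, by rw [sort_phiW, p.2]⟩
  invFun w := ⟨(uOf hb w.1, vOf hb w.1), by
    have := sort_phiW (uOf hb w.1) (vOf hb w.1)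
    rw [phiW_recon hb w.1, w.2] at this
    exact this.symm⟩
  left_inv := by
    rintro ⟨⟨u, v⟩, h⟩
    apply Subtype.ext
    simp only []
    rw [vOf_phiW hb u v, uOf_phiW hb u v]
  right_inv := by
    rintro ⟨w, hw⟩
    apply Subtype.ext
    exact phiW_recon hb w

lemma Na_mul (ha : 1 ≤ a) (hb : 1 ≤ b) (μ : Equiv.Perm (Fin n)) :
    ∑ π : Equiv.Perm (Fin n), Na n a (π⁻¹ * μ) * Na n b π = Na n (a * b) μ := by
  have h1 : ∀ π : Equiv.Perm (Fin n), Na n a (π⁻¹ * μ) * Na n b π =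
      Fintype.card ({u : Fin n → Fin a // Tuple.sort u = π⁻¹ * μ} ×
        {v : Fin n → Fin b // Tuple.sort v = π}) := fun π => by
    simp only [Na]
    exact (Fintype.card_prod _ _).symm
  calc ∑ π : Equiv.Perm (Fin n), Na n a (π⁻¹ * μ) * Na n b π
      = ∑ π : Equiv.Perm (Fin n), Fintype.card ({u : Fin n → Fin a // Tuple.sort u = π⁻¹ * μ} ×
          {v : Fin n → Fin b // Tuple.sort v = π}) := Finset.sum_congr rfl (fun π _ => h1 π)
    _ = Fintype.card ((π : Equiv.Perm (Fin n)) ×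
          ({u : Fin n → Fin a // Tuple.sort u = π⁻¹ * μ} ×
            {v : Fin n → Fin b // Tuple.sort v = π})) := (Fintype.card_sigma).symm
    _ = Na n (a * b) μ := ?_
  simp only [Na]
  exact Fintype.card_congr ((E2lem μ).trans (E3lem hb μ))

lemma Pa_mul (ha : 1 ≤ a) (hb : 1 ≤ b) : Pa n a * Pa n b = Pa n (a * b) := by
  have hab : 1 ≤ a * b := Nat.one_le_iff_ne_zero.mpr (by positivity)
  ext σ τ
  rw [Matrix.mul_apply]
  simp only [Pa_apply ha, Pa_apply hb, Pa_apply hab]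
  have hsplit : ∀ ρ : Equiv.Perm (Fin n),
      (Na n a (ρ⁻¹ * σ) : ℚ) / (a : ℚ) ^ n * ((Na n b (τ⁻¹ * ρ) : ℚ) / (b : ℚ) ^ n) =
      (Na n a (ρ⁻¹ * σ) : ℚ) * (Na n b (τ⁻¹ * ρ) : ℚ) / ((a : ℚ) ^ n * (b : ℚ) ^ n) :=
    fun ρ => div_mul_div_comm _ _ _ _
  rw [Finset.sum_congr rfl (fun ρ _ => hsplit ρ), ← Finset.sum_div]
  have hnum : ∑ ρ : Equiv.Perm (Fin n), (Na n a (ρ⁻¹ * σ) : ℚ) * (Na n b (τ⁻¹ * ρ) : ℚ)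
      = ((∑ π : Equiv.Perm (Fin n), Na n a (π⁻¹ * (τ⁻¹ * σ)) * Na n b π : ℕ) : ℚ) := by
    rw [← Equiv.sum_comp (Equiv.mulLeft τ)
      (fun ρ => (Na n a (ρ⁻¹ * σ) : ℚ) * (Na n b (τ⁻¹ * ρ) : ℚ))]
    push_cast
    apply Finset.sum_congr rfl
    intro π _
    simp only [Equiv.coe_mulLeft]
    rw [mul_inv_rev, mul_assoc, inv_mul_cancel_left]
  rw [hnum, Na_mul ha hb]
  congr 1
  push_cast
  rw [mul_pow]

lemma Pa_pow {n a : ℕ} (ha : 1 ≤ a) (t : ℕ) : (Pa n a) ^ t = Pa n (a ^ t) := by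
  induction t with
  | zero => rw [pow_zero, pow_zero, Pa_one]
  | succ t ih =>
    rw [pow_succ, ih, Pa_mul (Nat.one_le_pow _ _ ha) ha, ← pow_succ]

end Mul


section PeakCount

variable {n : ℕ}

/-- number of triples `(x,y,z)` with `x ≤ y` and `z < y` -/
def Tc (c : ℕ) : ℕ :=
  Fintype.card {t : Fin c × Fin c × Fin c // t.1 ≤ t.2.1 ∧ t.2.2 < t.2.1}

lemma sum_sq_aux (c : ℕ) : 3 * (∑ i ∈ Finset.range c, (i + 1) * i) + c = c ^ 3 := by
  induction c with
  | zero => rfl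
  | succ c ih =>
    rw [Finset.sum_range_succ]
    have expand : 3 * (∑ i ∈ Finset.range c, (i + 1) * i + (c + 1) * c) + (c + 1) =
        (3 * (∑ i ∈ Finset.range c, (i + 1) * i) + c) + (3 * c ^ 2 + 3 * c + 1) := by ring
    rw [expand, ih]
    ring

lemma Tc_eq (c : ℕ) : 3 * Tc c + c = c ^ 3 := by
  have h1 : Tc c = ∑ y : Fin c, ((y : ℕ) + 1) * (y : ℕ) := by
    rw [Tc]
    rw [Fintype.card_congr
      (show {t : Fin c × Fin c × Fin c // t.1 ≤ t.2.1 ∧ t.2.2 < t.2.1} ≃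
          ((y : Fin c) × ({x : Fin c // x ≤ y} × {z : Fin c // z < y})) from
        { toFun := fun t => ⟨t.1.2.1, ⟨t.1.1, t.2.1⟩, ⟨t.1.2.2, t.2.2⟩⟩
          invFun := fun s => ⟨(s.2.1.1, s.1, s.2.2.1), s.2.1.2, s.2.2.2⟩
          left_inv := by rintro ⟨⟨x, y, z⟩, h1, h2⟩; rfl
          right_inv := by rintro ⟨y, ⟨x, hx⟩, ⟨z, hz⟩⟩; rfl })]
    rw [Fintype.card_sigma]
    apply Finset.sum_congr rfl
    intro y _
    rw [Fintype.card_prod]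
    have e1 : {x : Fin c // x ≤ y} ≃ Fin ((y : ℕ) + 1) :=
      { toFun := fun x => ⟨(x.1 : ℕ), by have := x.2; omega⟩
        invFun := fun k => ⟨⟨(k : ℕ), by have := k.isLt; have := y.isLt; omega⟩,
          by have := k.isLt; exact Fin.mk_le_mk.mpr (by omega)⟩
        left_inv := by rintro ⟨x, hx⟩; rfl
        right_inv := by rintro ⟨k, hk⟩; rfl }
    have e2 : {z : Fin c // z < y} ≃ Fin (y : ℕ) :=
      { toFun := fun z => ⟨(z.1 : ℕ), by have := z.2; exact this⟩
        invFun := fun k => ⟨⟨(k : ℕ), by have := k.isLt; have := y.isLt; omega⟩,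
          by have := k.isLt; exact Fin.mk_lt_mk.mpr (by omega)⟩
        left_inv := by rintro ⟨z, hz⟩; rfl
        right_inv := by rintro ⟨k, hk⟩; rfl }
    rw [Fintype.card_congr e1, Fintype.card_congr e2, Fintype.card_fin, Fintype.card_fin]
  rw [h1, Fin.sum_univ_eq_sum_range (fun y => (y + 1) * y)]
  exact sum_sq_aux c

/-- generic: subtype of a product by a predicate on the first factor -/
def subtypeProdFst {A B : Type*} (P : A → Prop) : {x : A × B // P x.1} ≃ {a : A // P a} × B where
  toFun x := (⟨x.1.1, x.2⟩, x.1.2)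
  invFun y := ⟨(y.1.1, y.2), y.1.2⟩
  left_inv := by rintro ⟨⟨a, b⟩, h⟩; rfl
  right_inv := by rintro ⟨⟨a, h⟩, b⟩; rfl

lemma card_cond {c : ℕ} {p q r : Fin n} (hpq : p ≠ q) (hpr : p ≠ r) (hqr : q ≠ r) :
    Fintype.card {w : Fin n → Fin c // w p ≤ w q ∧ w r < w q} = Tc c * c ^ (n - 3) := by
  set S : Finset (Fin n) := {p, q, r} with hS
  have hp : p ∈ S := by simp [hS]
  have hq : q ∈ S := by simp [hS]
  have hr : r ∈ S := by simp [hS]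
  have e1 : {w : Fin n → Fin c // w p ≤ w q ∧ w r < w q} ≃
      {x : ({j : Fin n // j ∈ S} → Fin c) × ({j : Fin n // ¬ j ∈ S} → Fin c) //
        x.1 ⟨p, hp⟩ ≤ x.1 ⟨q, hq⟩ ∧ x.1 ⟨r, hr⟩ < x.1 ⟨q, hq⟩} :=
    Equiv.subtypeEquiv (Equiv.piEquivPiSubtypeProd (fun j => j ∈ S) (fun _ => Fin c))
      (fun w => Iff.rfl)
  have e2 := subtypeProdFst (B := {j : Fin n // ¬ j ∈ S} → Fin c)
    (fun g : {j : Fin n // j ∈ S} → Fin c => g ⟨p, hp⟩ ≤ g ⟨q, hq⟩ ∧ g ⟨r, hr⟩ < g ⟨q, hq⟩)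
  have e3 : {g : {j : Fin n // j ∈ S} → Fin c //
      g ⟨p, hp⟩ ≤ g ⟨q, hq⟩ ∧ g ⟨r, hr⟩ < g ⟨q, hq⟩} ≃
      {t : Fin c × Fin c × Fin c // t.1 ≤ t.2.1 ∧ t.2.2 < t.2.1} :=
    { toFun := fun g => ⟨(g.1 ⟨p, hp⟩, g.1 ⟨q, hq⟩, g.1 ⟨r, hr⟩), g.2⟩
      invFun := fun t => ⟨fun j => if j.1 = p then t.1.1 else if j.1 = q then t.1.2.1
          else t.1.2.2, by
        simpa [hpq, hpr, hqr, (Ne.symm hpq), (Ne.symm hpr), (Ne.symm hqr)] using t.2⟩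
      left_inv := by
        rintro ⟨g, hg⟩
        apply Subtype.ext
        funext j
        obtain ⟨j, hj⟩ := j
        simp only []
        rcases Finset.mem_insert.mp hj with rfl | hj'
        · simp
        rcases Finset.mem_insert.mp hj' with rfl | hj''
        · simp [Ne.symm hpq]
        · have : j = r := Finset.mem_singleton.mp hj''
          subst this
          simp [Ne.symm hpr, Ne.symm hqr]
      right_inv := by
        rintro ⟨⟨x, y, z⟩, h1, h2⟩
        apply Subtype.ext
        simp [hpq, hpr, hqr, Ne.symm hpq, Ne.symm hpr, Ne.symm hqr] }
  have hcard : Fintype.card {j : Fin n // j ∈ S} = 3 := by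
    rw [Fintype.card_coe]
    exact Finset.card_eq_three.mpr ⟨p, q, r, hpq, hpr, hqr, rfl⟩
  have hcompl : Fintype.card {j : Fin n // ¬ j ∈ S} = n - 3 := by
    rw [Fintype.card_subtype_compl, hcard, Fintype.card_fin]
  rw [Fintype.card_congr ((e1.trans e2).trans (e3.prodCongr (Equiv.refl _))),
    Fintype.card_prod, Fintype.card_fun, hcompl, Fintype.card_fin]
  simp only [Tc]

lemma sum_Na_pk {c : ℕ} (hc : 1 ≤ c) :
    ∑ τ : Equiv.Perm (Fin n), Na n c τ⁻¹ * pk n τ = (n - 2) * (Tc c * c ^ (n - 3)) := by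
  have h1 : ∑ τ : Equiv.Perm (Fin n), Na n c τ⁻¹ * pk n τ =
      ∑ ρ : Equiv.Perm (Fin n), Na n c ρ * pk n ρ⁻¹ := by
    rw [← Equiv.sum_comp (Equiv.inv (Equiv.Perm (Fin n)))
      (fun ρ => Na n c ρ * pk n ρ⁻¹)]
    apply Finset.sum_congr rfl
    intro τ _
    simp
  rw [h1]
  have h2 : ∑ ρ : Equiv.Perm (Fin n), Na n c ρ * pk n ρ⁻¹ =
      ∑ w : Fin n → Fin c, pk n (Tuple.sort w)⁻¹ := by
    rw [← Finset.sum_fiberwise Finset.univ (fun w : Fin n → Fin c => Tuple.sort w)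
      (fun w => pk n (Tuple.sort w)⁻¹)]
    apply Finset.sum_congr rfl
    intro ρ _
    have : ∀ w ∈ Finset.univ.filter (fun w : Fin n → Fin c => Tuple.sort w = ρ),
        pk n (Tuple.sort w)⁻¹ = pk n ρ⁻¹ := by
      intro w hw
      rw [(Finset.mem_filter.mp hw).2]
    rw [Finset.sum_congr rfl this, Finset.sum_const, smul_eq_mul, Na, Fintype.card_subtype]
  rw [h2]
  have h3 : ∀ w : Fin n → Fin c, pk n (Tuple.sort w)⁻¹ =
      ∑ i ∈ Finset.range (n - 2), if (∃ h : i + 2 < n,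
        (Tuple.sort w)⁻¹ ⟨i, Nat.lt_of_succ_lt (Nat.lt_of_succ_lt h)⟩ <
          (Tuple.sort w)⁻¹ ⟨i + 1, Nat.lt_of_succ_lt h⟩ ∧
        (Tuple.sort w)⁻¹ ⟨i + 2, h⟩ < (Tuple.sort w)⁻¹ ⟨i + 1, Nat.lt_of_succ_lt h⟩)
        then 1 else 0 := by
    intro w
    rw [pk, peakSet, Finset.card_filter]
  rw [Finset.sum_congr rfl (fun w _ => h3 w), Finset.sum_comm]
  have h4 : ∀ i ∈ Finset.range (n - 2),
      (∑ w : Fin n → Fin c, if (∃ h : i + 2 < n,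
        (Tuple.sort w)⁻¹ ⟨i, Nat.lt_of_succ_lt (Nat.lt_of_succ_lt h)⟩ <
          (Tuple.sort w)⁻¹ ⟨i + 1, Nat.lt_of_succ_lt h⟩ ∧
        (Tuple.sort w)⁻¹ ⟨i + 2, h⟩ < (Tuple.sort w)⁻¹ ⟨i + 1, Nat.lt_of_succ_lt h⟩)
        then 1 else 0) = Tc c * c ^ (n - 3) := by
    intro i hi
    have hi2 : i + 2 < n := by
      have := Finset.mem_range.mp hi
      omega
    have hcond : ∀ w : Fin n → Fin c, (∃ h : i + 2 < n,
        (Tuple.sort w)⁻¹ ⟨i, Nat.lt_of_succ_lt (Nat.lt_of_succ_lt h)⟩ <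
          (Tuple.sort w)⁻¹ ⟨i + 1, Nat.lt_of_succ_lt h⟩ ∧
        (Tuple.sort w)⁻¹ ⟨i + 2, h⟩ < (Tuple.sort w)⁻¹ ⟨i + 1, Nat.lt_of_succ_lt h⟩) ↔
        (w ⟨i, Nat.lt_of_succ_lt (Nat.lt_of_succ_lt hi2)⟩ ≤ w ⟨i + 1, Nat.lt_of_succ_lt hi2⟩ ∧
          w ⟨i + 2, hi2⟩ < w ⟨i + 1, Nat.lt_of_succ_lt hi2⟩) := by
      intro w
      rw [exists_prop_of_true hi2]
      constructor
      · rintro ⟨hA, hB⟩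
        constructor
        · rcases (inv_sort_lt_iff w _ _).mp hA with h | ⟨h, -⟩
          · exact le_of_lt h
          · exact le_of_eq h
        · rcases (inv_sort_lt_iff w _ _).mp hB with h | ⟨-, h⟩
          · exact h
          · exfalso
            rw [Fin.lt_def] at h
            simp at h
      · rintro ⟨hA, hB⟩
        constructor
        · apply (inv_sort_lt_iff w _ _).mpr
          rcases lt_or_eq_of_le hA with h | h
          · exact Or.inl h
          · exact Or.inr ⟨h, by rw [Fin.lt_def]; simp⟩
        · exact (inv_sort_lt_iff w _ _).mpr (Or.inl hB)
    rw [Finset.sum_congr rfl (fun w _ => by rw [if_congr (hcond w) rfl rfl]),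
      ← Finset.card_filter, ← Fintype.card_subtype]
    exact card_cond (by simp [Fin.ext_iff]) (by simp [Fin.ext_iff]) (by simp [Fin.ext_iff])
  rw [Finset.sum_congr rfl h4, Finset.sum_const, Finset.card_range, smul_eq_mul]

end PeakCount

/-- Starting from the ascending deck, the expected number of peaks after `t`
iterations of the `a`-handed shuffle is `(1 - a^{-2t})(n-2)/3`. -/
theorem stmt16 (n a : ℕ) (hn : 2 ≤ n) (ha : 1 ≤ a) (t : ℕ) :
    ((Pa n a) ^ t).mulVec (fun τ => (pk n τ : ℚ)) 1 =
      (1 - ((a : ℚ) ^ (2 * t))⁻¹) * ((n : ℚ) - 2) / 3 := by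
  set c := a ^ t with hcdef
  have hc : 1 ≤ c := Nat.one_le_pow _ _ ha
  have hC0 : ((c : ℚ)) ≠ 0 := Nat.cast_ne_zero.mpr (by omega)
  rw [Pa_pow ha t]
  have hmv : (Pa n c).mulVec (fun τ => (pk n τ : ℚ)) 1 =
      ∑ τ : Equiv.Perm (Fin n), Pa n c 1 τ * pk n τ := by
    simp [Matrix.mulVec, dotProduct]
  rw [hmv]
  have hterm : ∀ τ : Equiv.Perm (Fin n),
      Pa n c 1 τ * (pk n τ : ℚ) = ((Na n c τ⁻¹ * pk n τ : ℕ) : ℚ) / (c : ℚ) ^ n := by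
    intro τ
    rw [Pa_apply hc, mul_one, div_mul_eq_mul_div]
    push_cast
    ring
  rw [Finset.sum_congr rfl (fun τ _ => hterm τ), ← Finset.sum_div, ← Nat.cast_sum,
    sum_Na_pk hc]
  have hpow : (a : ℚ) ^ (2 * t) = (c : ℚ) ^ 2 := by
    rw [hcdef]
    push_cast
    rw [← pow_mul, mul_comm]
  rw [hpow]
  have hT : 3 * (Tc c : ℚ) + c = (c : ℚ) ^ 3 := by exact_mod_cast Tc_eq c
  have hTc : (Tc c : ℚ) = ((c : ℚ) ^ 3 - c) / 3 := by linarith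
  rcases Nat.lt_or_ge n 3 with h3 | h3
  · have hn2 : n = 2 := by omega
    subst hn2
    norm_num
  · obtain ⟨k, rfl⟩ : ∃ k, n = k + 3 := ⟨n - 3, by omega⟩
    have hsub1 : k + 3 - 2 = k + 1 := rfl
    have hsub2 : k + 3 - 3 = k := rfl
    rw [hsub1, hsub2]
    push_cast
    rw [hTc]
    field_simp
    ring
end
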